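/- arXiv:1812.11472 — 5 statements merged into one kernel-verified Lean document; each statement's English description precedes it below -/
import Mathlib

section
/- If M is a matroid of rank k on a finite set S and dim Δ_M = |S| − q, then there exist a partition (J_1, J_2, …, J_q) of S and, for each i = 1,…,q, a matroid M_i of rank k_i on J_i, such that (k_1, k_2, …, k_q) is a partition of k (i.e. k_1 + … + k_q = k), Δ_M = Δ_{M_1} × Δ_{M_2} × … × Δ_{M_q} inside ℝ^{J_1} × ℝ^{J_2} × … × ℝ^{J_q} = ℝ^S, and dim Δ_{M_i} = |J_i| − 1 for each i. -/
open Finset Module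

/-- The 0-1 indicator vector `δ_B ∈ ℝ^S` of a finite subset `B` of `S`. -/
def delta {S : Type} [DecidableEq S] (B : Finset S) : S → ℝ := fun i => if i ∈ B then 1 else 0

/-- A matroid of rank `k` on `S`, given by its collection of bases: a nonempty collection of
`k`-element subsets satisfying the exchange property. -/
def IsMatroid {S : Type} [DecidableEq S] (k : ℕ) (M : Finset (Finset S)) : Prop :=
  M.Nonempty ∧ (∀ I ∈ M, I.card = k) ∧
    ∀ I ∈ M, ∀ J ∈ M, I ≠ J → ∀ i ∈ I \ J, ∃ j ∈ J \ I, insert j (I.erase i) ∈ M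

/-- The matroid polytope: the convex hull of the indicator vectors of the members of `M`. -/
def matroidPolytope {S : Type} [DecidableEq S] (M : Finset (Finset S)) : Set (S → ℝ) :=
  convexHull ℝ (delta '' (M : Set (Finset S)))

/-- The hypersimplex `Δ_{S,k}`: the convex hull of all `δ_B` with `|B| = k`. -/
def hypersimplex (S : Type) [DecidableEq S] (k : ℕ) : Set (S → ℝ) :=
  convexHull ℝ (delta '' {B : Finset S | B.card = k})

/-- `E` is an edge (a one-dimensional face) of the polytope `P`. -/
def IsEdgeOf {S : Type} (P E : Set (S → ℝ)) : Prop :=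
  IsExposed ℝ P E ∧ Module.finrank ℝ (affineSpan ℝ E).direction = 1

/-- The dimension of a polytope: the dimension of its affine span. -/
noncomputable def polyDim {S : Type} (P : Set (S → ℝ)) : ℕ :=
  Module.finrank ℝ (affineSpan ℝ P).direction

/-- A polytope `P` of dimension `d` is simple at a vertex `v` if `v` lies on exactly `d` edges. -/
def IsSimpleAt {S : Type} (P : Set (S → ℝ)) (v : S → ℝ) : Prop :=
  {E : Set (S → ℝ) | IsEdgeOf P E ∧ v ∈ E}.ncard = polyDim P

/-- A polytope is simple if it is simple at every vertex. -/
def IsSimplePolytope {S : Type} (P : Set (S → ℝ)) : Prop :=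
  ∀ v ∈ Set.extremePoints ℝ P, IsSimpleAt P v

/-- The hypersimplex `Δ_{J,k}` on the subset `J` of `S`, viewed inside `ℝ^S`:
the convex hull of all `δ_B` with `B ⊆ J`, `|B| = k`. -/
def hypersimplexOn {S : Type} [DecidableEq S] (J : Finset S) (k : ℕ) : Set (S → ℝ) :=
  convexHull ℝ (delta '' {B : Finset S | B ⊆ J ∧ B.card = k})

set_option linter.unusedSectionVars false

namespace GS

attribute [local instance] Classical.propDecidable

variable {S : Type} [Fintype S] [DecidableEq S] (M : Finset (Finset S))

/-- single exchange relation -/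
def rel (i j : S) : Prop :=
  ∃ I ∈ M, i ∈ I ∧ j ∉ I ∧ insert j (I.erase i) ∈ M

lemma rel_symm : Symmetric (rel M) := by
  rintro i j ⟨I, hIM, hiI, hjI, hI'⟩
  have hij : i ≠ j := fun h => hjI (h ▸ hiI)
  have hiI' : i ∉ insert j (I.erase i) := by
    simp [Finset.mem_insert, Finset.mem_erase]
    exact fun h => (hij h).elim
  refine ⟨insert j (I.erase i), hI', by simp, hiI', ?_⟩
  have : insert i ((insert j (I.erase i)).erase j) = I := by
    ext x
    simp only [Finset.mem_insert, Finset.mem_erase]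
    constructor
    · rintro (rfl | ⟨hxj, (rfl | ⟨hxi, hxI⟩)⟩)
      · exact hiI
      · exact absurd rfl hxj
      · exact hxI
    · intro hxI
      by_cases hx : x = i
      · exact Or.inl hx
      · exact Or.inr ⟨fun h => hjI (h ▸ hxI), Or.inr ⟨hx, hxI⟩⟩
  rwa [this]

def crel : S → S → Prop := Relation.ReflTransGen (rel M)

lemma crel_equiv : Equivalence (crel M) :=
  ⟨fun _ => Relation.ReflTransGen.refl,
   fun h => by
     induction h with
     | refl => exact Relation.ReflTransGen.refl
     | tail _ hs ih => exact Relation.ReflTransGen.head (rel_symm M hs) ih,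
   fun h h' => Relation.ReflTransGen.trans h h'⟩

def st : Setoid S := ⟨crel M, crel_equiv M⟩

abbrev Q := Quotient (st M)

noncomputable def cls (x : S) : Q M := Quotient.mk (st M) x

noncomputable def Jc (c : Q M) : Finset S := univ.filter (fun x => cls M x = c)

lemma mem_Jc {x : S} {c : Q M} : x ∈ Jc M c ↔ cls M x = c := by simp [Jc]

lemma mem_Jc_cls (x : S) : x ∈ Jc M (cls M x) := mem_Jc M |>.2 rfl

lemma cls_eq_of_crel {x y : S} (h : crel M x y) : cls M x = cls M y := Quotient.sound h

lemma crel_of_cls_eq {x y : S} (h : cls M x = cls M y) : crel M x y := Quotient.exact h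

noncomputable def Ms (c : Q M) : Finset (Finset S) := M.image (· ∩ Jc M c)

lemma subset_Jc {c : Q M} {B : Finset S} (hB : B ∈ Ms M c) : B ⊆ Jc M c := by
  simp only [Ms, Finset.mem_image] at hB
  obtain ⟨I, _, rfl⟩ := hB
  exact Finset.inter_subset_right


section Matroid

variable {k : ℕ} (hM : IsMatroid k M)
include hM

/-- Exchange, recording that the exchanged pair is related. -/
lemma exchange_rel {I K : Finset S} (hI : I ∈ M) (hK : K ∈ M) (hne : I ≠ K)
    {i : S} (hi : i ∈ I \ K) :
    ∃ j ∈ K \ I, insert j (I.erase i) ∈ M ∧ rel M i j := by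
  obtain ⟨j, hj, hins⟩ := hM.2.2 I hI K hK hne i hi
  exact ⟨j, hj, hins, ⟨I, hI, (Finset.mem_sdiff.1 hi).1, (Finset.mem_sdiff.1 hj).2, hins⟩⟩

omit hM in
/-- intersection with a class after a swap inside the class -/
lemma swap_inter_eq_of_mem {I : Finset S} {i j : S} {c : Q M}
    (hjI : j ∉ I) (hic : i ∈ Jc M c) (hjc : j ∈ Jc M c) :
    (insert j (I.erase i)) ∩ Jc M c = insert j ((I ∩ Jc M c).erase i) := by
  ext x
  simp only [Finset.mem_inter, Finset.mem_insert, Finset.mem_erase]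
  constructor
  · rintro ⟨(rfl | ⟨hxi, hxI⟩), hxc⟩
    · exact Or.inl rfl
    · exact Or.inr ⟨hxi, hxI, hxc⟩
  · rintro (rfl | ⟨hxi, hxI, hxc⟩)
    · exact ⟨Or.inl rfl, hjc⟩
    · exact ⟨Or.inr ⟨hxi, hxI⟩, hxc⟩

omit hM in
lemma swap_inter_eq_of_not_mem {I : Finset S} {i j : S} {c : Q M}
    (hic : i ∉ Jc M c) (hjc : j ∉ Jc M c) :
    (insert j (I.erase i)) ∩ Jc M c = I ∩ Jc M c := by
  ext x
  simp only [Finset.mem_inter, Finset.mem_insert, Finset.mem_erase]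
  constructor
  · rintro ⟨(rfl | ⟨hxi, hxI⟩), hxc⟩
    · exact absurd hxc hjc
    · exact ⟨hxI, hxc⟩
  · rintro ⟨hxI, hxc⟩
    exact ⟨Or.inr ⟨fun h => hic (h ▸ hxc), hxI⟩, hxc⟩

omit hM in
lemma swap_inter_card {I : Finset S} {i j : S} (hiI : i ∈ I) (hjI : j ∉ I)
    (hij : cls M i = cls M j) (c : Q M) :
    ((insert j (I.erase i)) ∩ Jc M c).card = (I ∩ Jc M c).card := by
  by_cases hic : i ∈ Jc M c
  · have hjc : j ∈ Jc M c := mem_Jc M |>.2 (hij ▸ (mem_Jc M |>.1 hic))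
    rw [swap_inter_eq_of_mem M hjI hic hjc]
    have hiIc : i ∈ I ∩ Jc M c := Finset.mem_inter.2 ⟨hiI, hic⟩
    have hjIc : j ∉ (I ∩ Jc M c).erase i := fun h =>
      hjI (Finset.mem_inter.1 (Finset.mem_of_mem_erase h)).1
    rw [Finset.card_insert_of_notMem hjIc, Finset.card_erase_of_mem hiIc]
    have : 1 ≤ (I ∩ Jc M c).card := Finset.card_pos.2 ⟨i, hiIc⟩
    omega
  · have hjc : j ∉ Jc M c := fun h => hic (mem_Jc M |>.2 (hij ▸ (mem_Jc M |>.1 h)))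
    rw [swap_inter_eq_of_not_mem M hic hjc]

omit hM in
lemma sdiff_after_swap {I K : Finset S} {i j : S} (hi : i ∈ I \ K) (hj : j ∈ K \ I) :
    (insert j (I.erase i)) \ K = (I \ K).erase i := by
  have hjK : j ∈ K := (Finset.mem_sdiff.1 hj).1
  ext x
  simp only [Finset.mem_sdiff, Finset.mem_insert, Finset.mem_erase]
  constructor
  · rintro ⟨(rfl | ⟨hxi, hxI⟩), hxK⟩
    · exact absurd hjK hxK
    · exact ⟨hxi, hxI, hxK⟩
  · rintro ⟨hxi, hxI, hxK⟩
    exact ⟨Or.inr ⟨hxi, hxI⟩, hxK⟩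

/-- Invariance of class intersection cardinalities across bases. -/
lemma inter_card_inv : ∀ n : ℕ, ∀ I ∈ M, ∀ K ∈ M, (I \ K).card = n →
    ∀ c : Q M, (I ∩ Jc M c).card = (K ∩ Jc M c).card := by
  intro n
  induction n using Nat.strong_induction_on with
  | _ n ih =>
    intro I hI K hK hcard c
    by_cases hne : I = K
    · subst hne; rfl
    · have hIK : (I \ K).Nonempty := by
        rw [Finset.sdiff_nonempty]
        intro hsub
        exact hne (Finset.eq_of_subset_of_card_le hsub
          (le_of_eq ((hM.2.1 K hK).trans (hM.2.1 I hI).symm)))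
      obtain ⟨i, hi⟩ := hIK
      obtain ⟨j, hj, hins, hrel⟩ := exchange_rel M hM hI hK hne hi
      have hij : cls M i = cls M j := cls_eq_of_crel M (Relation.ReflTransGen.single hrel)
      have hiI : i ∈ I := (Finset.mem_sdiff.1 hi).1
      have hjI : j ∉ I := (Finset.mem_sdiff.1 hj).2
      have hstep : ((insert j (I.erase i)) \ K).card < n := by
        rw [sdiff_after_swap hi hj, Finset.card_erase_of_mem hi, ← hcard]
        have : 1 ≤ (I \ K).card := Finset.card_pos.2 ⟨i, hi⟩
        omega
      have := ih _ hstep (insert j (I.erase i)) hins K hK rfl c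
      rw [← this, swap_inter_card M hiI hjI hij c]

lemma inter_card_eq {I K : Finset S} (hI : I ∈ M) (hK : K ∈ M) (c : Q M) :
    (I ∩ Jc M c).card = (K ∩ Jc M c).card :=
  inter_card_inv M hM _ I hI K hK rfl c

/-- Lemma A: splice the part of K in a class into I. -/
lemma splice_mem : ∀ n : ℕ, ∀ I ∈ M, ∀ K ∈ M, ∀ c : Q M, ((I \ K) ∩ Jc M c).card = n →
    ((I \ Jc M c) ∪ (K ∩ Jc M c)) ∈ M := by
  intro n
  induction n using Nat.strong_induction_on with
  | _ n ih =>
    intro I hI K hK c hcard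
    by_cases hempty : ((I \ K) ∩ Jc M c) = ∅
    · -- then I ∩ Jc c = K ∩ Jc c and the union is I
      have hsub : I ∩ Jc M c ⊆ K ∩ Jc M c := by
        intro x hx
        rcases Finset.mem_inter.1 hx with ⟨hxI, hxc⟩
        by_cases hxK : x ∈ K
        · exact Finset.mem_inter.2 ⟨hxK, hxc⟩
        · exact absurd (Finset.mem_inter.2 ⟨Finset.mem_sdiff.2 ⟨hxI, hxK⟩, hxc⟩)
            (by simp [hempty])
      have heq : I ∩ Jc M c = K ∩ Jc M c :=
        Finset.eq_of_subset_of_card_le hsub (le_of_eq (inter_card_eq M hM hK hI c))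
      have : (I \ Jc M c) ∪ (K ∩ Jc M c) = I := by
        rw [← heq]
        ext x
        simp only [Finset.mem_union, Finset.mem_sdiff, Finset.mem_inter]
        by_cases hxc : x ∈ Jc M c <;> tauto
      rwa [this]
    · obtain ⟨i, hi⟩ := Finset.nonempty_of_ne_empty hempty
      rcases Finset.mem_inter.1 hi with ⟨hiIK, hic⟩
      have hne : I ≠ K := by
        intro h; subst h; simp at hiIK
      obtain ⟨j, hj, hins, hrel⟩ := exchange_rel M hM hI hK hne hiIK
      have hij : cls M i = cls M j := cls_eq_of_crel M (Relation.ReflTransGen.single hrel)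
      have hjc : j ∈ Jc M c := mem_Jc M |>.2 (hij ▸ (mem_Jc M |>.1 hic))
      have hjI : j ∉ I := (Finset.mem_sdiff.1 hj).2
      set I' := insert j (I.erase i) with hI'def
      have hstep : ((I' \ K) ∩ Jc M c).card < n := by
        rw [hI'def, sdiff_after_swap hiIK hj]
        have : ((I \ K).erase i) ∩ Jc M c = ((I \ K) ∩ Jc M c).erase i := by
          ext x
          simp only [Finset.mem_inter, Finset.mem_erase]
          tauto
        rw [this, Finset.card_erase_of_mem hi, ← hcard]
        have : 1 ≤ ((I \ K) ∩ Jc M c).card := Finset.card_pos.2 ⟨i, hi⟩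
        omega
      have hres := ih _ hstep I' hins K hK c rfl
      have : I' \ Jc M c = I \ Jc M c := by
        ext x
        simp only [hI'def, Finset.mem_sdiff, Finset.mem_insert, Finset.mem_erase]
        constructor
        · rintro ⟨(rfl | ⟨hxi, hxI⟩), hxc⟩
          · exact absurd hjc hxc
          · exact ⟨hxI, hxc⟩
        · rintro ⟨hxI, hxc⟩
          exact ⟨Or.inr ⟨fun h => hxc (h ▸ hic), hxI⟩, hxc⟩
      rwa [this] at hres

lemma splice_mem' {I K : Finset S} (hI : I ∈ M) (hK : K ∈ M) (c : Q M) :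
    ((I \ Jc M c) ∪ (K ∩ Jc M c)) ∈ M :=
  splice_mem M hM _ I hI K hK c rfl


omit hM in
lemma inter_Jc_mem {I : Finset S} (hI : I ∈ M) (c : Q M) : I ∩ Jc M c ∈ Ms M c :=
  Finset.mem_image.2 ⟨I, hI, rfl⟩

omit hM in
lemma Jc_disjoint {c d : Q M} (hcd : c ≠ d) {x : S} (hx : x ∈ Jc M c) : x ∉ Jc M d :=
  fun h => hcd (((mem_Jc M).1 hx) ▸ ((mem_Jc M).1 h) ▸ rfl)

omit hM in
lemma splice_inter_self {I K : Finset S} (c : Q M) :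
    ((I \ Jc M c) ∪ (K ∩ Jc M c)) ∩ Jc M c = K ∩ Jc M c := by
  ext x
  simp only [Finset.mem_inter, Finset.mem_union, Finset.mem_sdiff]
  tauto

omit hM in
lemma splice_inter_other {I K : Finset S} {c d : Q M} (hcd : c ≠ d) :
    ((I \ Jc M c) ∪ (K ∩ Jc M c)) ∩ Jc M d = I ∩ Jc M d := by
  ext x
  simp only [Finset.mem_inter, Finset.mem_union, Finset.mem_sdiff]
  constructor
  · rintro ⟨(⟨hxI, _⟩ | ⟨_, hxc⟩), hxd⟩
    · exact ⟨hxI, hxd⟩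
    · exact absurd hxd (Jc_disjoint M hcd hxc)
  · rintro ⟨hxI, hxd⟩
    exact ⟨Or.inl ⟨hxI, fun h => (Jc_disjoint M hcd h hxd)⟩, hxd⟩

/-- Lemma B: combine per-class parts into a basis. -/
lemma combine_mem (B : Q M → Finset S) (hB : ∀ c, B c ∈ Ms M c) :
    ∀ T : Finset (Q M), ∃ I ∈ M, ∀ c ∈ T, I ∩ Jc M c = B c := by
  intro T
  induction T using Finset.induction_on with
  | empty => exact ⟨hM.1.choose, hM.1.choose_spec, fun c hc => absurd hc (Finset.notMem_empty c)⟩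
  | @insert c T hcT ih =>
    obtain ⟨I, hI, hIT⟩ := ih
    obtain ⟨K, hK, hKc⟩ := Finset.mem_image.1 (hB c)
    refine ⟨(I \ Jc M c) ∪ (K ∩ Jc M c), splice_mem' M hM hI hK c, ?_⟩
    intro d hd
    rcases Finset.mem_insert.1 hd with rfl | hdT
    · rw [splice_inter_self M, hKc]
    · have hcd : c ≠ d := fun h => hcT (h ▸ hdT)
      rw [splice_inter_other M hcd, hIT d hdT]

/-- rank of the component `c` -/
noncomputable def ksc (c : Q M) : ℕ := (hM.1.choose ∩ Jc M c).card

lemma Ms_card {c : Q M} {B : Finset S} (hB : B ∈ Ms M c) : B.card = ksc M hM c := by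
  obtain ⟨I, hI, rfl⟩ := Finset.mem_image.1 hB
  exact inter_card_eq M hM hI hM.1.choose_spec c

/-- Each `Ms c` is a matroid. -/
lemma Ms_isMatroid (c : Q M) : IsMatroid (ksc M hM c) (Ms M c) := by
  refine ⟨⟨hM.1.choose ∩ Jc M c, inter_Jc_mem M hM.1.choose_spec c⟩,
    fun B hB => Ms_card M hM hB, ?_⟩
  intro B hB B' hB' hne i hi
  obtain ⟨I, hI, rfl⟩ := Finset.mem_image.1 hB
  obtain ⟨K, hK, rfl⟩ := Finset.mem_image.1 hB'
  rcases Finset.mem_sdiff.1 hi with ⟨hiB, hiB'⟩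
  rcases Finset.mem_inter.1 hiB with ⟨hiI, hic⟩
  set K' := (I \ Jc M c) ∪ (K ∩ Jc M c) with hK'def
  have hK'M : K' ∈ M := splice_mem' M hM hI hK c
  have hK'c : K' ∩ Jc M c = K ∩ Jc M c := splice_inter_self M c
  have hne' : I ≠ K' := by
    intro h
    apply hne
    rw [h, hK'c]
  have hiK' : i ∉ K' := by
    intro h
    rcases Finset.mem_union.1 h with h1 | h2
    · exact (Finset.mem_sdiff.1 h1).2 hic
    · exact hiB' h2
  obtain ⟨j, hj, hins, hrel⟩ := exchange_rel M hM hI hK'M hne'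
    (Finset.mem_sdiff.2 ⟨hiI, hiK'⟩)
  rcases Finset.mem_sdiff.1 hj with ⟨hjK', hjI⟩
  have hij : cls M i = cls M j := cls_eq_of_crel M (Relation.ReflTransGen.single hrel)
  have hjc : j ∈ Jc M c := (mem_Jc M).2 (hij ▸ (mem_Jc M).1 hic)
  have hjB' : j ∈ K ∩ Jc M c := by
    have : j ∈ K' ∩ Jc M c := Finset.mem_inter.2 ⟨hjK', hjc⟩
    rwa [hK'c] at this
  have hjB : j ∉ I ∩ Jc M c := fun h => hjI (Finset.mem_inter.1 h).1
  refine ⟨j, Finset.mem_sdiff.2 ⟨hjB', hjB⟩, ?_⟩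
  have : insert j ((I ∩ Jc M c).erase i) = (insert j (I.erase i)) ∩ Jc M c :=
    (swap_inter_eq_of_mem M hjI hic hjc).symm
  rw [this]
  exact inter_Jc_mem M hins c


end Matroid

noncomputable instance : Fintype (Q M) := Fintype.ofFinite _

/-- standard basis vector -/
def ed (s : S) : S → ℝ := fun t => if t = s then 1 else 0

omit [Fintype S] in
lemma delta_swap {I : Finset S} {i j : S} (hi : i ∈ I) (hj : j ∉ I) :
    delta I - delta (insert j (I.erase i)) = ed i - ed j := by
  have hij : i ≠ j := fun h => hj (h ▸ hi)
  funext t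
  simp only [Pi.sub_apply, delta, ed, Finset.mem_insert, Finset.mem_erase]
  by_cases h1 : t = i <;> by_cases h2 : t = j
  · exact absurd (h1.symm.trans h2) hij
  · simp [h1, h2, hi, hij]
  · simp [h1, h2, hj, hij.symm]
  · by_cases h3 : t ∈ I <;> simp [h1, h2, h3]

lemma sum_smul_ed (x : S → ℝ) : ∑ s : S, x s • ed s = x := by
  funext t
  rw [Finset.sum_apply]
  have h : ∀ s ∈ Finset.univ, (x s • ed s) t = if s = t then x s else 0 := by
    intro s _
    simp only [Pi.smul_apply, ed, smul_eq_mul]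
    by_cases h : t = s
    · simp [h]
    · simp [h, Ne.symm h]
  rw [Finset.sum_congr rfl h, Finset.sum_ite_eq' Finset.univ t x]
  simp

section VS

variable {k : ℕ}

/-- one exchange step gives a vector in the span of the matroid polytope -/
lemma step_mem {a b : S} (h : rel M a b) :
    ed a - ed b ∈ vectorSpan ℝ (delta '' (M : Set (Finset S))) := by
  obtain ⟨I, hI, haI, hbI, hins⟩ := h
  have := vsub_mem_vectorSpan ℝ (Set.mem_image_of_mem delta (Finset.mem_coe.2 hI))
    (Set.mem_image_of_mem delta (Finset.mem_coe.2 hins))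
  rwa [vsub_eq_sub, delta_swap haI hbI] at this

lemma chain_mem {a b : S} (h : crel M a b) :
    ed a - ed b ∈ vectorSpan ℝ (delta '' (M : Set (Finset S))) := by
  induction h with
  | refl => simp
  | tail hab hstep ih =>
    rename_i b' c'
    have h2 := step_mem M hstep
    have := Submodule.add_mem _ ih h2
    simpa using this

/-- one exchange step inside a class -/
lemma step_mem_c {a b : S} (h : rel M a b) {c : Q M} (ha : cls M a = c) :
    ed a - ed b ∈ vectorSpan ℝ (delta '' (Ms M c : Set (Finset S))) := by
  have hb : cls M b = c := ha ▸ (cls_eq_of_crel M (Relation.ReflTransGen.single h)).symm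
  obtain ⟨I, hI, haI, hbI, hins⟩ := h
  have hac : a ∈ Jc M c := (mem_Jc M).2 ha
  have hbc : b ∈ Jc M c := (mem_Jc M).2 hb
  have hB : I ∩ Jc M c ∈ Ms M c := inter_Jc_mem M hI c
  have hB' : (insert b (I.erase a)) ∩ Jc M c ∈ Ms M c := inter_Jc_mem M hins c
  rw [swap_inter_eq_of_mem M hbI hac hbc] at hB'
  have haB : a ∈ I ∩ Jc M c := Finset.mem_inter.2 ⟨haI, hac⟩
  have hbB : b ∉ I ∩ Jc M c := fun hh => hbI (Finset.mem_inter.1 hh).1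
  have := vsub_mem_vectorSpan ℝ (Set.mem_image_of_mem delta (Finset.mem_coe.2 hB))
    (Set.mem_image_of_mem delta (Finset.mem_coe.2 hB'))
  rwa [vsub_eq_sub, delta_swap haB hbB] at this

lemma chain_mem_c {a b : S} (h : crel M a b) {c : Q M} (ha : cls M a = c) :
    ed a - ed b ∈ vectorSpan ℝ (delta '' (Ms M c : Set (Finset S))) := by
  induction h with
  | refl => simp
  | tail hab hstep ih =>
    rename_i b' c'
    have hb' : cls M b' = c := ha ▸ (cls_eq_of_crel M hab).symm
    have h2 := step_mem_c M hstep hb'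
    have := Submodule.add_mem _ ih h2
    simpa using this

/-- the linear functional recording class sums -/
noncomputable def Lmap : (S → ℝ) →ₗ[ℝ] (Q M → ℝ) where
  toFun x := fun c => ∑ s ∈ Jc M c, x s
  map_add' x y := by funext c; simp [Finset.sum_add_distrib]
  map_smul' r x := by funext c; simp [Finset.mul_sum]

lemma mem_ker_Lmap {x : S → ℝ} :
    x ∈ LinearMap.ker (Lmap M) ↔ ∀ c : Q M, ∑ s ∈ Jc M c, x s = 0 := by
  rw [LinearMap.mem_ker]
  constructor
  · intro h c; exact congrFun h c
  · intro h; funext c; exact h c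

lemma delta_sum_class (I : Finset S) (c : Q M) :
    ∑ s ∈ Jc M c, delta I s = ((I ∩ Jc M c).card : ℝ) := by
  simp only [delta]
  rw [Finset.sum_boole]
  congr 1
  rw [Finset.filter_mem_eq_inter, Finset.inter_comm]

lemma vectorSpan_eq_ker (hM : IsMatroid k M) : vectorSpan ℝ (delta '' (M : Set (Finset S))) = LinearMap.ker (Lmap M) := by
  apply le_antisymm
  · rw [vectorSpan_def]
    rw [Submodule.span_le]
    rintro v hv
    rw [Set.mem_vsub] at hv
    obtain ⟨p1, hp1, p2, hp2, rfl⟩ := hv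
    obtain ⟨I, hI, rfl⟩ := hp1
    obtain ⟨K, hK, rfl⟩ := hp2
    rw [SetLike.mem_coe, vsub_eq_sub, mem_ker_Lmap]
    intro c
    simp only [Pi.sub_apply]
    rw [Finset.sum_sub_distrib, delta_sum_class M, delta_sum_class M,
      inter_card_eq M hM hI hK c, sub_self]
  · intro x hx
    rw [mem_ker_Lmap] at hx
    have key : x = ∑ s : S, x s • (ed s - ed (Quotient.out (cls M s))) := by
      have h2 : (∑ s : S, x s • ed (Quotient.out (cls M s))) = 0 := by
        rw [← Finset.sum_fiberwise_of_maps_to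
          (fun s (_ : s ∈ Finset.univ) => Finset.mem_univ (cls M s))
          (fun s => x s • ed (Quotient.out (cls M s)))]
        apply Finset.sum_eq_zero
        intro c _
        have hcongr : ∀ s ∈ Finset.univ.filter (fun s => cls M s = c),
            x s • ed (Quotient.out (cls M s)) = x s • ed (Quotient.out c) := by
          intro s hs
          rw [(Finset.mem_filter.1 hs).2]
        rw [Finset.sum_congr rfl hcongr, ← Finset.sum_smul]
        have hfil : Finset.univ.filter (fun s => cls M s = c) = Jc M c := rfl
        rw [hfil, hx c, zero_smul]
      calc x = ∑ s : S, x s • ed s - ∑ s : S, x s • ed (Quotient.out (cls M s)) := by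
              rw [h2, sub_zero, sum_smul_ed]
        _ = ∑ s : S, x s • (ed s - ed (Quotient.out (cls M s))) := by
              rw [← Finset.sum_sub_distrib]
              exact Finset.sum_congr rfl fun s _ => (smul_sub _ _ _).symm
    rw [key]
    apply Submodule.sum_mem
    intro s _
    apply Submodule.smul_mem
    apply chain_mem M
    apply crel_of_cls_eq M
    show cls M s = cls M (Quotient.out (cls M s))
    simp only [cls]
    rw [Quotient.out_eq]

/-- the linear map cutting out the span of a component polytope -/
noncomputable def Lc (c : Q M) : (S → ℝ) →ₗ[ℝ] ({ s : S // s ∉ Jc M c } → ℝ) × ℝ where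
  toFun x := (fun s => x s.1, ∑ s ∈ Jc M c, x s)
  map_add' x y := by
    ext s
    · simp
    · simp [Finset.sum_add_distrib]
  map_smul' r x := by
    ext s
    · simp
    · simp [Finset.mul_sum]

lemma mem_ker_Lc {c : Q M} {x : S → ℝ} :
    x ∈ LinearMap.ker (Lc M c) ↔ (∀ s, s ∉ Jc M c → x s = 0) ∧ ∑ s ∈ Jc M c, x s = 0 := by
  rw [LinearMap.mem_ker, Prod.ext_iff]
  constructor
  · rintro ⟨h1, h2⟩
    exact ⟨fun s hs => congrFun h1 ⟨s, hs⟩, h2⟩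
  · rintro ⟨h1, h2⟩
    exact ⟨funext fun s => h1 s.1 s.2, h2⟩

lemma out_mem_Jc (c : Q M) : Quotient.out c ∈ Jc M c := by
  rw [mem_Jc]
  show Quotient.mk (st M) (Quotient.out c) = c
  exact Quotient.out_eq c

lemma vectorSpan_eq_ker_c (hM : IsMatroid k M) (c : Q M) :
    vectorSpan ℝ (delta '' (Ms M c : Set (Finset S))) = LinearMap.ker (Lc M c) := by
  apply le_antisymm
  · rw [vectorSpan_def, Submodule.span_le]
    rintro v hv
    rw [Set.mem_vsub] at hv
    obtain ⟨p1, hp1, p2, hp2, rfl⟩ := hv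
    obtain ⟨B, hB, rfl⟩ := hp1
    obtain ⟨B', hB', rfl⟩ := hp2
    rw [SetLike.mem_coe, vsub_eq_sub, mem_ker_Lc]
    have hBJ : B ⊆ Jc M c := subset_Jc M (Finset.mem_coe.1 hB)
    have hB'J : B' ⊆ Jc M c := subset_Jc M (Finset.mem_coe.1 hB')
    constructor
    · intro s hs
      have h1 : s ∉ B := fun h => hs (hBJ h)
      have h2 : s ∉ B' := fun h => hs (hB'J h)
      simp [delta, h1, h2]
    · simp only [Pi.sub_apply]
      rw [Finset.sum_sub_distrib, delta_sum_class M, delta_sum_class M]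
      have e1 : B ∩ Jc M c = B := Finset.inter_eq_left.2 hBJ
      have e2 : B' ∩ Jc M c = B' := Finset.inter_eq_left.2 hB'J
      rw [e1, e2, Ms_card M hM (Finset.mem_coe.1 hB), Ms_card M hM (Finset.mem_coe.1 hB'),
        sub_self]
  · intro x hx
    rw [mem_ker_Lc] at hx
    obtain ⟨hx0, hxs⟩ := hx
    set r := Quotient.out c with hrdef
    have hr : r ∈ Jc M c := out_mem_Jc M c
    have key : x = ∑ s ∈ Jc M c, x s • (ed s - ed r) := by
      have h1 : ∑ s ∈ Jc M c, x s • ed s = x := by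
        funext t
        rw [Finset.sum_apply]
        have h : ∀ s ∈ Jc M c, (x s • ed s) t = if s = t then x s else 0 := by
          intro s _
          simp only [Pi.smul_apply, ed, smul_eq_mul]
          by_cases h : t = s
          · simp [h]
          · simp [h, Ne.symm h]
        rw [Finset.sum_congr rfl h, Finset.sum_ite_eq' (Jc M c) t x]
        by_cases ht : t ∈ Jc M c
        · simp [ht]
        · simp [ht, hx0 t ht]
      have h2 : (∑ s ∈ Jc M c, x s • ed r) = 0 := by
        rw [← Finset.sum_smul, hxs, zero_smul]
      calc x = ∑ s ∈ Jc M c, x s • ed s - ∑ s ∈ Jc M c, x s • ed r := by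
              rw [h2, sub_zero, h1]
        _ = ∑ s ∈ Jc M c, x s • (ed s - ed r) := by
              rw [← Finset.sum_sub_distrib]
              exact Finset.sum_congr rfl fun s _ => (smul_sub _ _ _).symm
    rw [key]
    apply Submodule.sum_mem
    intro s hs
    apply Submodule.smul_mem
    have hsc : cls M s = c := (mem_Jc M).1 hs
    apply chain_mem_c M _ hsc
    apply crel_of_cls_eq M
    rw [hsc, (mem_Jc M).1 hr]

lemma Lmap_surj : Function.Surjective (Lmap M) := by
  intro g
  refine ⟨fun s => g (cls M s) / ((Jc M (cls M s)).card : ℝ), ?_⟩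
  funext c
  show ∑ s ∈ Jc M c, g (cls M s) / ((Jc M (cls M s)).card : ℝ) = g c
  have h1 : ∀ s ∈ Jc M c, g (cls M s) / ((Jc M (cls M s)).card : ℝ)
      = g c / ((Jc M c).card : ℝ) := by
    intro s hs
    rw [(mem_Jc M).1 hs]
  rw [Finset.sum_congr rfl h1, Finset.sum_const, nsmul_eq_mul]
  have hne : (Jc M c).Nonempty := ⟨Quotient.out c, out_mem_Jc M c⟩
  have hcard : ((Jc M c).card : ℝ) ≠ 0 := by
    simp [Finset.card_ne_zero_of_mem (out_mem_Jc M c)]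
  field_simp

lemma Lc_surj (c : Q M) : Function.Surjective (Lc M c) := by
  rintro ⟨h, t⟩
  refine ⟨fun s => if hs : s ∈ Jc M c then (if s = Quotient.out c then t else 0) else h ⟨s, hs⟩, ?_⟩
  have hr : Quotient.out c ∈ Jc M c := out_mem_Jc M c
  ext s
  · simp only [Lc, LinearMap.coe_mk, AddHom.coe_mk]
    rw [dif_neg s.2]
  · simp only [Lc, LinearMap.coe_mk, AddHom.coe_mk]
    have : ∀ s ∈ Jc M c,
        (if hs : s ∈ Jc M c then (if s = Quotient.out c then t else 0) else h ⟨s, hs⟩)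
          = if s = Quotient.out c then t else 0 := by
      intro s hs
      rw [dif_pos hs]
    rw [Finset.sum_congr rfl this, Finset.sum_ite_eq' (Jc M c) (Quotient.out c) (fun _ => t),
      if_pos hr]

lemma finrank_ker_Lmap : finrank ℝ (LinearMap.ker (Lmap M)) + Fintype.card (Q M)
    = Fintype.card S := by
  have h := (Lmap M).finrank_range_add_finrank_ker
  rw [LinearMap.range_eq_top.2 (Lmap_surj M), finrank_top,
    Module.finrank_fintype_fun_eq_card, Module.finrank_fintype_fun_eq_card] at h
  omega

lemma finrank_ker_Lc (c : Q M) :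
    finrank ℝ (LinearMap.ker (Lc M c)) + (Fintype.card S - (Jc M c).card) + 1
      = Fintype.card S := by
  have h := (Lc M c).finrank_range_add_finrank_ker
  rw [LinearMap.range_eq_top.2 (Lc_surj M c), finrank_top,
    Module.finrank_fintype_fun_eq_card] at h
  rw [Module.finrank_prod, Module.finrank_fintype_fun_eq_card, finrank_self] at h
  have hcard : Fintype.card { s : S // s ∉ Jc M c } = Fintype.card S - (Jc M c).card := by
    rw [Fintype.card_subtype_compl]
    congr 1
    exact Fintype.card_coe (Jc M c)
  rw [hcard] at h
  have hle : (Jc M c).card ≤ Fintype.card S := Finset.card_le_univ _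
  omega

lemma polyDim_eq (hM : IsMatroid k M) :
    polyDim (matroidPolytope M) + Fintype.card (Q M) = Fintype.card S := by
  rw [matroidPolytope, polyDim, affineSpan_convexHull, direction_affineSpan,
    vectorSpan_eq_ker M hM]
  exact finrank_ker_Lmap M

lemma polyDim_c_eq (hM : IsMatroid k M) (c : Q M) :
    polyDim (matroidPolytope (Ms M c)) = (Jc M c).card - 1 := by
  rw [matroidPolytope, polyDim, affineSpan_convexHull, direction_affineSpan,
    vectorSpan_eq_ker_c M hM c]
  have h := finrank_ker_Lc M c
  have hle : (Jc M c).card ≤ Fintype.card S := Finset.card_le_univ _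
  have hpos : 1 ≤ (Jc M c).card := Finset.card_pos.2 ⟨Quotient.out c, out_mem_Jc M c⟩
  omega

end VS

lemma sum_delta_classes (I : Finset S) : ∑ c : Q M, delta (I ∩ Jc M c) = delta I := by
  funext t
  rw [Finset.sum_apply]
  have h : ∀ c ∈ Finset.univ, delta (I ∩ Jc M c) t = if c = cls M t then delta I t else 0 := by
    intro c _
    by_cases hc : c = cls M t
    · subst hc
      have ht : t ∈ Jc M (cls M t) := mem_Jc_cls M t
      simp [delta, Finset.mem_inter, ht]
    · have htc : t ∉ Jc M c := fun h => hc ((mem_Jc M).1 h).symm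
      have : t ∉ I ∩ Jc M c := fun h => htc (Finset.mem_inter.1 h).2
      simp [delta, this, hc]
  rw [Finset.sum_congr rfl h,
    Finset.sum_ite_eq' Finset.univ (cls M t) (fun _ => delta I t)]
  simp

/-- summation as a linear map -/
noncomputable def sumL (q : ℕ) : (Fin q → (S → ℝ)) →ₗ[ℝ] (S → ℝ) where
  toFun y := ∑ i, y i
  map_add' y z := by simp [Finset.sum_add_distrib]
  map_smul' r y := by simp [Finset.smul_sum]

variable {k : ℕ}

lemma image_pi_eq (hM : IsMatroid k M) {q : ℕ} (e : Fin q ≃ Q M) :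
    (sumL q) '' (Set.univ.pi fun i => (delta '' (Ms M (e i) : Set (Finset S))))
      = delta '' (M : Set (Finset S)) := by
  apply Set.Subset.antisymm
  · rintro x ⟨y, hy, rfl⟩
    rw [Set.mem_pi] at hy
    choose B hB hBy using fun i => hy i (Set.mem_univ i)
    have hB' : ∀ c : Q M, B (e.symm c) ∈ Ms M c := by
      intro c
      have h := hB (e.symm c)
      rw [e.apply_symm_apply] at h
      exact h
    obtain ⟨I, hI, hIc⟩ := combine_mem M hM (fun c => B (e.symm c)) hB' Finset.univ
    refine ⟨I, hI, ?_⟩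
    show delta I = sumL q y
    have hyi : ∀ i, y i = delta (I ∩ Jc M (e i)) := by
      intro i
      rw [← hBy i, hIc (e i) (Finset.mem_univ _), e.symm_apply_apply]
    show delta I = ∑ i, y i
    rw [Finset.sum_congr rfl (fun i _ => hyi i)]
    rw [Equiv.sum_comp e (fun c => delta (I ∩ Jc M c)), sum_delta_classes M I]
  · rintro x ⟨I, hI, rfl⟩
    refine ⟨fun i => delta (I ∩ Jc M (e i)), ?_, ?_⟩
    · rw [Set.mem_pi]
      intro i _
      exact Set.mem_image_of_mem delta (Finset.mem_coe.2 (inter_Jc_mem M (Finset.mem_coe.1 hI) (e i)))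
    · show (∑ i, delta (I ∩ Jc M (e i))) = delta I
      rw [Equiv.sum_comp e (fun c => delta (I ∩ Jc M c)), sum_delta_classes M I]

lemma polytope_eq (hM : IsMatroid k M) {q : ℕ} (e : Fin q ≃ Q M) :
    matroidPolytope M = {x | ∃ y : Fin q → (S → ℝ),
      (∀ i, y i ∈ matroidPolytope (Ms M (e i))) ∧ x = ∑ i, y i} := by
  have hset : {x | ∃ y : Fin q → (S → ℝ),
      (∀ i, y i ∈ matroidPolytope (Ms M (e i))) ∧ x = ∑ i, y i}
      = (sumL q) '' (Set.univ.pi fun i => matroidPolytope (Ms M (e i))) := by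
    ext x
    simp only [Set.mem_image, Set.mem_pi, Set.mem_univ, forall_true_left, Set.mem_setOf_eq]
    constructor
    · rintro ⟨y, hy, rfl⟩
      exact ⟨y, fun i => hy i, rfl⟩
    · rintro ⟨y, hy, rfl⟩
      exact ⟨y, fun i => hy i, rfl⟩
  rw [hset]
  have hpi : (Set.univ.pi fun i => matroidPolytope (Ms M (e i)))
      = convexHull ℝ (Set.univ.pi fun i => (delta '' (Ms M (e i) : Set (Finset S)))) := by
    rw [convexHull_pi]
    rfl
  rw [hpi, (sumL q).image_convexHull, image_pi_eq M hM e]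
  rfl

lemma sum_ksc (hM : IsMatroid k M) : ∑ c : Q M, ksc M hM c = k := by
  have hI0 := hM.1.choose_spec
  have hcard : hM.1.choose.card = k := hM.2.1 _ hI0
  have hsum : ∑ c : Q M, ksc M hM c = hM.1.choose.card := by
    rw [Finset.card_eq_sum_card_fiberwise (f := fun x => cls M x) (t := Finset.univ)
      (fun x _ => Finset.mem_univ _)]
    apply Finset.sum_congr rfl
    intro c _
    have hfs : hM.1.choose.filter (fun x => cls M x = c) = hM.1.choose ∩ Jc M c := by
      ext x
      simp [Jc, Finset.mem_inter, Finset.mem_filter, and_comm]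
    show (hM.1.choose ∩ Jc M c).card = _
    rw [hfs]
  exact hsum.trans hcard

end GS

/-- **Proposition 1.2 (Gelfand–Serganova).** If `M` is a matroid of rank `k` on `S` and
`dim Δ_M = |S| − q`, then there are a partition `(J_1, …, J_q)` of `S` and matroids `M_i` of
rank `k_i` on `J_i` with `k_1 + ⋯ + k_q = k` such that `Δ_M = Δ_{M_1} × ⋯ × Δ_{M_q}` inside
`ℝ^{J_1} × ⋯ × ℝ^{J_q} = ℝ^S` (the product of polytopes supported on the disjoint coordinate
subspaces `ℝ^{J_i}` being the set of sums) and `dim Δ_{M_i} = |J_i| − 1` for each `i`. -/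
theorem matroid_polytope_decomposition
    (S : Type) [Fintype S] [DecidableEq S] (k q : ℕ)
    (M : Finset (Finset S)) (hM : IsMatroid k M)
    (hdim : polyDim (matroidPolytope M) + q = Fintype.card S) :
    ∃ (J : Fin q → Finset S) (ks : Fin q → ℕ) (Ms : Fin q → Finset (Finset S)),
      (∀ x : S, ∃! i, x ∈ J i) ∧
      (∀ i, IsMatroid (ks i) (Ms i)) ∧
      (∀ i, ∀ I ∈ Ms i, I ⊆ J i) ∧
      (∑ i, ks i = k) ∧
      (matroidPolytope M =
        {x | ∃ y : Fin q → (S → ℝ), (∀ i, y i ∈ matroidPolytope (Ms i)) ∧ x = ∑ i, y i}) ∧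
      (∀ i, polyDim (matroidPolytope (Ms i)) = (J i).card - 1) := by
  have hq : Fintype.card (GS.Q M) = q := by
    have h := GS.polyDim_eq M hM
    omega
  let e : Fin q ≃ GS.Q M := (Fintype.equivFinOfCardEq hq).symm
  refine ⟨fun i => GS.Jc M (e i), fun i => GS.ksc M hM (e i), fun i => GS.Ms M (e i),
    ?_, ?_, ?_, ?_, ?_, ?_⟩
  · intro x
    refine ⟨e.symm (GS.cls M x), ?_, ?_⟩
    · show x ∈ GS.Jc M (e (e.symm (GS.cls M x)))
      rw [GS.mem_Jc, e.apply_symm_apply]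
    · intro i hi
      have hi' : GS.cls M x = e i := (GS.mem_Jc M).1 hi
      rw [hi', e.symm_apply_apply]
  · intro i
    exact GS.Ms_isMatroid M hM (e i)
  · intro i I hI
    exact GS.subset_Jc M hI
  · rw [Equiv.sum_comp e (fun c => GS.ksc M hM c)]
    exact GS.sum_ksc M hM
  · exact GS.polytope_eq M hM e
  · intro i
    exact GS.polyDim_c_eq M hM (e i)
end

section
/- Let Δ_M be the matroid polytope of a matroid M of rank k on [n] with dim Δ_M = n − 1, let v = δ_J be a vertex of Δ_M, and let i ∉ J and j ∈ J. Then δ_J + δ_i − δ_j is a vertex of Δ_M if and only if i and j are joined by an edge of the graph Γ(R_v(Δ_M)). -/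
open Finset Module

/-- The `i`-th standard basis vector `δ_i` of `ℝⁿ`. -/
def stdBasis (n : ℕ) (i : Fin n) : Fin n → ℝ := fun j => if j = i then 1 else 0

/-- The set `Φ = {δ_i − δ_j : i ≠ j in [n]}`. -/
def Phi (n : ℕ) : Set (Fin n → ℝ) :=
  {x | ∃ i j : Fin n, i ≠ j ∧ x = stdBasis n i - stdBasis n j}

/-- For `R ⊆ Φ` with `R ∩ (−R) = ∅`, the simple graph `Γ(R)` on vertex set `[n]` in which
`{i, j}` is an edge iff `δ_i − δ_j ∈ R` or `δ_j − δ_i ∈ R`. -/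
def Gamma (n : ℕ) (R : Set (Fin n → ℝ)) : SimpleGraph (Fin n) :=
  SimpleGraph.fromRel (fun i j => stdBasis n i - stdBasis n j ∈ R)

/-- For a vertex `v = δ_J` of the matroid polytope `Δ_M`, the set
`R_v(Δ_M) = {δ_i − δ_j : ∃ I ∈ M, δ_Iδ_J is an edge of Δ_M, {i} = I \ J, {j} = J \ I}`. -/
def Rv (n : ℕ) (M : Finset (Finset (Fin n))) (J : Finset (Fin n)) : Set (Fin n → ℝ) :=
  {x | ∃ I ∈ M, IsEdgeOf (matroidPolytope M) (segment ℝ (delta I) (delta J)) ∧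
    ∃ i j : Fin n, I \ J = {i} ∧ J \ I = {j} ∧ x = stdBasis n i - stdBasis n j}


noncomputable def lB {n : ℕ} (B : Finset (Fin n)) : (Fin n → ℝ) →L[ℝ] ℝ :=
  ∑ t ∈ B, ContinuousLinearMap.proj t

lemma lB_delta {n : ℕ} (B C : Finset (Fin n)) : lB B (delta C) = ((B ∩ C).card : ℝ) := by
  simp [lB, delta, ContinuousLinearMap.sum_apply, Finset.sum_boole, Finset.filter_mem_eq_inter]

lemma delta_injective {S : Type} [DecidableEq S] : Function.Injective (delta (S := S)) := by
  intro B C h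
  ext t
  have := congrFun h t
  simp only [delta] at this
  by_cases hB : t ∈ B <;> by_cases hC : t ∈ C <;> simp_all

lemma face_convexHull {n : ℕ} (s : Finset (Fin n → ℝ)) (l : (Fin n → ℝ) →L[ℝ] ℝ) (c : ℝ)
    (hb : ∀ x ∈ s, l x ≤ c) (x : Fin n → ℝ) (hx : x ∈ convexHull ℝ (s : Set (Fin n → ℝ)))
    (hxc : l x = c) :
    x ∈ convexHull ℝ {y ∈ (s : Set (Fin n → ℝ)) | l y = c} := by
  classical
  rw [Finset.convexHull_eq] at hx
  obtain ⟨w, h0, h1, hcm⟩ := hx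
  rw [Finset.centerMass_eq_of_sum_1 _ _ h1] at hcm
  have hlx : ∑ y ∈ s, w y * l y = c := by
    rw [← hxc, ← hcm]; simp [map_sum]
  have key : ∀ y ∈ s, w y * (c - l y) = 0 := by
    intro y hy
    have hsum : ∑ y ∈ s, w y * (c - l y) = 0 := by
      simp only [mul_sub]
      rw [Finset.sum_sub_distrib, hlx, ← Finset.sum_mul, h1, one_mul, sub_self]
    exact (Finset.sum_eq_zero_iff_of_nonneg (fun y hy =>
      mul_nonneg (h0 y hy) (sub_nonneg.2 (hb y hy)))).1 hsum y hy
  set t := s.filter (fun y => l y = c) with ht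
  have hw0 : ∀ y ∈ s, y ∉ t → w y = 0 := by
    intro y hy hyt
    have : l y ≠ c := by simp [ht, hy] at hyt; exact fun h => hyt h
    rcases mul_eq_zero.1 (key y hy) with h | h
    · exact h
    · exact absurd (by linarith [sub_eq_zero.1 h]) this
  have h1' : ∑ y ∈ t, w y = 1 := by
    rw [Finset.sum_subset (Finset.filter_subset _ _) (fun y hy hyt => hw0 y hy hyt)]
    exact h1
  have hx' : ∑ y ∈ t, w y • y = x := by
    rw [Finset.sum_subset (Finset.filter_subset _ _)
      (fun y hy hyt => by rw [hw0 y hy hyt, zero_smul])]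
    simpa using hcm
  have hmem : x ∈ convexHull ℝ (t : Set (Fin n → ℝ)) := by
    rw [Finset.convexHull_eq]
    refine ⟨w, fun y hy => h0 y (Finset.filter_subset _ _ hy), h1', ?_⟩
    rw [Finset.centerMass_eq_of_sum_1 _ _ h1']
    simpa using hx'
  refine convexHull_mono ?_ hmem
  intro y hy
  rw [Finset.mem_coe, ht, Finset.mem_filter] at hy
  exact ⟨hy.1, hy.2⟩

lemma coe_image_delta {n : ℕ} (M : Finset (Finset (Fin n))) [DecidableEq (Fin n → ℝ)] :
    ((M.image delta : Finset (Fin n → ℝ)) : Set (Fin n → ℝ))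
      = delta '' (M : Set (Finset (Fin n))) := by
  simp [Finset.coe_image]

lemma lB_le_on_polytope {n : ℕ} (M : Finset (Finset (Fin n))) (l : (Fin n → ℝ) →L[ℝ] ℝ) (c : ℝ)
    (hb : ∀ C ∈ M, l (delta C) ≤ c) : ∀ y ∈ matroidPolytope M, l y ≤ c := by
  intro y hy
  have hconv : Convex ℝ {w : Fin n → ℝ | l w ≤ c} :=
    convex_halfSpace_le ⟨fun a b => map_add l a b, fun r a => map_smul l r a⟩ c
  have := convexHull_min (fun x hx => ?_) hconv hy
  · exact this
  · obtain ⟨C, hC, rfl⟩ := hx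
    exact hb C hC

lemma delta_extreme {n k : ℕ} (M : Finset (Finset (Fin n))) (hcard : ∀ C ∈ M, C.card = k)
    (B : Finset (Fin n)) (hB : B ∈ M) :
    delta B ∈ Set.extremePoints ℝ (matroidPolytope M) := by
  classical
  have hbd : ∀ C ∈ M, lB B (delta C) ≤ (k : ℝ) := by
    intro C hC
    rw [lB_delta]
    exact_mod_cast Nat.cast_le.2 ((Finset.card_le_card Finset.inter_subset_left).trans
      (hcard B hB).le)
  have hBval : lB B (delta B) = (k : ℝ) := by
    rw [lB_delta, Finset.inter_self, hcard B hB]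
  have heqB : ∀ C ∈ M, lB B (delta C) = (k : ℝ) → C = B := by
    intro C hC hv
    rw [lB_delta] at hv
    have hcardeq : (B ∩ C).card = B.card := by
      rw [hcard B hB]; exact_mod_cast hv
    have hBC : B ⊆ C := by
      rw [← Finset.inter_eq_left]
      exact Finset.eq_of_subset_of_card_le Finset.inter_subset_left hcardeq.ge
    exact (Finset.eq_of_subset_of_card_le hBC (by rw [hcard B hB, hcard C hC])).symm
  have hface : {y ∈ (delta '' (M : Set (Finset (Fin n)))) | lB B y = (k : ℝ)} =
      ({delta B} : Set (Fin n → ℝ)) := by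
    ext y
    constructor
    · rintro ⟨⟨C, hC, rfl⟩, hv⟩
      simp [heqB C hC hv]
    · rintro rfl
      exact ⟨⟨B, hB, rfl⟩, hBval⟩
  rw [mem_extremePoints]
  refine ⟨subset_convexHull ℝ _ ⟨B, hB, rfl⟩, ?_⟩
  intro x₁ h₁ x₂ h₂ hseg
  obtain ⟨a, b, ha, hb', hab, hsum⟩ := hseg
  have hub := lB_le_on_polytope M (lB B) (k : ℝ) hbd
  have e1 : lB B x₁ ≤ (k : ℝ) := hub x₁ h₁
  have e2 : lB B x₂ ≤ (k : ℝ) := hub x₂ h₂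
  have hval : a * lB B x₁ + b * lB B x₂ = (k : ℝ) := by
    have := congrArg (lB B) hsum
    simpa [map_add, map_smul, hBval, smul_eq_mul] using this
  have hx₁ : lB B x₁ = (k : ℝ) := by nlinarith
  have hx₂ : lB B x₂ = (k : ℝ) := by nlinarith
  have hmem₁ : x₁ ∈ convexHull ℝ ((M.image delta : Finset (Fin n → ℝ)) : Set (Fin n → ℝ)) := by
    rw [coe_image_delta]; exact h₁
  have hmem₂ : x₂ ∈ convexHull ℝ ((M.image delta : Finset (Fin n → ℝ)) : Set (Fin n → ℝ)) := by
    rw [coe_image_delta]; exact h₂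
  have hb' : ∀ x ∈ (M.image delta : Finset (Fin n → ℝ)), lB B x ≤ (k : ℝ) := by
    intro x hx
    rw [Finset.mem_image] at hx
    obtain ⟨C, hC, rfl⟩ := hx
    exact hbd C hC
  have hc₁ := face_convexHull _ _ _ hb' x₁ hmem₁ hx₁
  have hc₂ := face_convexHull _ _ _ hb' x₂ hmem₂ hx₂
  rw [coe_image_delta, hface, convexHull_singleton] at hc₁ hc₂
  exact ⟨hc₁, hc₂⟩

lemma edge_of_exchange {n k : ℕ} (M : Finset (Finset (Fin n))) (hcard : ∀ C ∈ M, C.card = k)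
    (J : Finset (Fin n)) (hJ : J ∈ M) (i j : Fin n) (hi : i ∉ J) (hj : j ∈ J)
    (hI : insert i (J.erase j) ∈ M) :
    IsEdgeOf (matroidPolytope M) (segment ℝ (delta (insert i (J.erase j))) (delta J)) := by
  classical
  set I₀ := insert i (J.erase j) with hI₀
  have hij : i ≠ j := fun h => hi (h ▸ hj)
  have hiJ' : i ∉ J.erase j := fun h => hi (Finset.mem_of_mem_erase h)
  have hjI : j ∉ I₀ := by
    simp [hI₀, hij.symm]
  have hiI : i ∈ I₀ := Finset.mem_insert_self _ _
  set e := (J.erase j).card with he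
  have he1 : e + 1 = J.card := Finset.card_erase_add_one hj
  have hk : J.card = k := hcard J hJ
  have hI₀card : I₀.card = e + 1 := by
    rw [hI₀, Finset.card_insert_of_notMem hiJ']
  set l : (Fin n → ℝ) →L[ℝ] ℝ := (2 : ℝ) • lB (J.erase j) + lB {i, j} with hl
  set c : ℝ := 2 * e + 1 with hc
  have hval : ∀ C : Finset (Fin n),
      l (delta C) = 2 * ((J.erase j ∩ C).card : ℝ) + (({i, j} ∩ C).card : ℝ) := by
    intro C
    simp [hl, lB_delta, ContinuousLinearMap.add_apply, ContinuousLinearMap.smul_apply,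
      smul_eq_mul]
  have hdisj : Disjoint (J.erase j) ({i, j} : Finset (Fin n)) := by
    rw [Finset.disjoint_right]
    intro t ht
    rcases Finset.mem_insert.1 ht with rfl | ht
    · exact hiJ'
    · rw [Finset.mem_singleton] at ht
      subst ht
      exact Finset.notMem_erase _ _
  have hnat : ∀ C ∈ M, (J.erase j ∩ C).card ≤ e ∧
      (J.erase j ∩ C).card + ({i, j} ∩ C).card ≤ e + 1 := by
    intro C hC
    refine ⟨Finset.card_le_card Finset.inter_subset_left, ?_⟩
    have hd : Disjoint (J.erase j ∩ C) ({i, j} ∩ C) :=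
      hdisj.mono Finset.inter_subset_left Finset.inter_subset_left
    have hsub : (J.erase j ∩ C) ∪ ({i, j} ∩ C) ⊆ C :=
      Finset.union_subset Finset.inter_subset_right Finset.inter_subset_right
    have := Finset.card_le_card hsub
    rw [Finset.card_union_of_disjoint hd] at this
    rw [hcard C hC, ← hk, ← he1] at this
    exact this
  have hbd : ∀ C ∈ M, l (delta C) ≤ c := by
    intro C hC
    obtain ⟨h1, h2⟩ := hnat C hC
    rw [hval, hc]
    push_cast
    have : ((J.erase j ∩ C).card : ℝ) ≤ e := by exact_mod_cast h1
    have : ((J.erase j ∩ C).card : ℝ) + (({i, j} ∩ C).card : ℝ) ≤ e + 1 := by exact_mod_cast h2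
    linarith
  have hvalJ : l (delta J) = c := by
    rw [hval, hc]
    have h1 : J.erase j ∩ J = J.erase j := Finset.inter_eq_left.2 (Finset.erase_subset _ _)
    have h2 : ({i, j} : Finset (Fin n)) ∩ J = {j} := by
      ext t
      simp only [Finset.mem_inter, Finset.mem_insert, Finset.mem_singleton]
      constructor
      · rintro ⟨rfl | rfl, ht⟩
        · exact absurd ht hi
        · rfl
      · rintro rfl
        exact ⟨Or.inr rfl, hj⟩
    rw [h1, h2]
    simp [he]
  have hvalI : l (delta I₀) = c := by
    rw [hval, hc]
    have h1 : J.erase j ∩ I₀ = J.erase j :=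
      Finset.inter_eq_left.2 (Finset.subset_insert _ _)
    have h2 : ({i, j} : Finset (Fin n)) ∩ I₀ = {i} := by
      ext t
      simp only [Finset.mem_inter, Finset.mem_insert, Finset.mem_singleton]
      constructor
      · rintro ⟨rfl | rfl, ht⟩
        · rfl
        · exact absurd ht hjI
      · rintro rfl
        exact ⟨Or.inl rfl, hiI⟩
    rw [h1, h2]
    simp [he]
  have heqc : ∀ C ∈ M, l (delta C) = c → C = I₀ ∨ C = J := by
    intro C hC hv
    obtain ⟨h1, h2⟩ := hnat C hC
    rw [hval, hc] at hv
    have hv' : 2 * (J.erase j ∩ C).card + ({i, j} ∩ C).card = 2 * e + 1 := by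
      exact_mod_cast hv
    have ha : (J.erase j ∩ C).card = e := by omega
    have hb1 : 1 ≤ ({i, j} ∩ C).card := by omega
    have hsubJC : J.erase j ⊆ C := by
      rw [← Finset.inter_eq_left]
      exact Finset.eq_of_subset_of_card_le Finset.inter_subset_left (by rw [ha])
    obtain ⟨t, ht⟩ := Finset.card_pos.1 hb1
    have hCcard : C.card = e + 1 := by rw [hcard C hC, ← hk, ← he1]
    rcases Finset.mem_inter.1 ht with ⟨hti, htC⟩
    rcases Finset.mem_insert.1 hti with rfl | hti
    · left
      have hsub : I₀ ⊆ C := Finset.insert_subset htC hsubJC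
      exact (Finset.eq_of_subset_of_card_le hsub (by rw [hCcard, hI₀card])).symm
    · rw [Finset.mem_singleton] at hti
      subst hti
      right
      have hsub : J ⊆ C := by
        rw [← Finset.insert_erase hj]
        exact Finset.insert_subset htC hsubJC
      exact (Finset.eq_of_subset_of_card_le hsub (by rw [hCcard]; exact he1.le)).symm
  have hface : {y ∈ (delta '' (M : Set (Finset (Fin n)))) | l y = c} =
      ({delta I₀, delta J} : Set (Fin n → ℝ)) := by
    ext y
    constructor
    · rintro ⟨⟨C, hC, rfl⟩, hv⟩
      rcases heqc C hC hv with rfl | rfl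
      · exact Or.inl rfl
      · exact Or.inr rfl
    · rintro (rfl | rfl)
      · exact ⟨⟨I₀, hI, rfl⟩, hvalI⟩
      · exact ⟨⟨J, hJ, rfl⟩, hvalJ⟩
  have hub : ∀ y ∈ matroidPolytope M, l y ≤ c := lB_le_on_polytope M l c hbd
  have hsegconv : segment ℝ (delta I₀) (delta J) =
      convexHull ℝ ({delta I₀, delta J} : Set (Fin n → ℝ)) := (convexHull_pair _ _).symm
  have hsegP : segment ℝ (delta I₀) (delta J) ⊆ matroidPolytope M := by
    rw [hsegconv]
    apply convexHull_mono
    rintro y (rfl | rfl)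
    · exact ⟨I₀, hI, rfl⟩
    · exact ⟨J, hJ, rfl⟩
  have hsegc : ∀ x ∈ segment ℝ (delta I₀) (delta J), l x = c := by
    rw [hsegconv]
    intro x hx
    have hconv : Convex ℝ {w : Fin n → ℝ | l w = c} :=
      convex_hyperplane ⟨fun a b => map_add l a b, fun r a => map_smul l r a⟩ c
    refine convexHull_min ?_ hconv hx
    rintro y (rfl | rfl)
    · exact hvalI
    · exact hvalJ
  constructor
  · intro _
    refine ⟨l, ?_⟩
    ext x
    constructor
    · intro hx
      refine ⟨hsegP hx, fun y hy => ?_⟩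
      rw [hsegc x hx]
      exact hub y hy
    · rintro ⟨hxP, hmax⟩
      have hJP : delta J ∈ matroidPolytope M := subset_convexHull ℝ _ ⟨J, hJ, rfl⟩
      have hxc : l x = c := le_antisymm (hub x hxP) (hvalJ ▸ hmax _ hJP)
      have hb' : ∀ z ∈ (M.image delta : Finset (Fin n → ℝ)), l z ≤ c := by
        intro z hz
        rw [Finset.mem_image] at hz
        obtain ⟨C, hC, rfl⟩ := hz
        exact hbd C hC
      have hxmem : x ∈ convexHull ℝ ((M.image delta : Finset (Fin n → ℝ)) : Set (Fin n → ℝ)) := by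
        rw [coe_image_delta]; exact hxP
      have := face_convexHull _ _ _ hb' x hxmem hxc
      rw [coe_image_delta, hface, ← hsegconv] at this
      exact this
  · have hspan : affineSpan ℝ (segment ℝ (delta I₀) (delta J)) =
        affineSpan ℝ ({delta I₀, delta J} : Set (Fin n → ℝ)) := by
      rw [hsegconv, affineSpan_convexHull]
    rw [hspan, direction_affineSpan, vectorSpan_pair]
    apply finrank_span_singleton
    intro h
    have := congrFun h i
    simp [vsub_eq_sub, delta, hiI, hi] at this


/-- **Lemma 1.6.** For a matroid polytope `Δ_M` of full dimension `n − 1`, a vertex `v = δ_J`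
of `Δ_M`, and `i ∉ J`, `j ∈ J`: the point `δ_J + δ_i − δ_j` is a vertex of `Δ_M` if and only if
`i` and `j` are joined by an edge of the graph `Γ(R_v(Δ_M))`. -/
theorem vertex_iff_adj_in_gamma_Rv
    (n k : ℕ) (M : Finset (Finset (Fin n))) (hM : IsMatroid k M)
    (hdim : polyDim (matroidPolytope M) = n - 1)
    (J : Finset (Fin n)) (hJ : J ∈ M)
    (i j : Fin n) (hi : i ∉ J) (hj : j ∈ J) :
    (delta J + stdBasis n i - stdBasis n j ∈ Set.extremePoints ℝ (matroidPolytope M)) ↔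
      (Gamma n (Rv n M J)).Adj i j := by
  classical
  obtain ⟨-, hcard, -⟩ := hM
  have hij : i ≠ j := fun h => hi (h ▸ hj)
  set I₀ := insert i (J.erase j) with hI₀def
  have hiJ' : i ∉ J.erase j := fun h => hi (Finset.mem_of_mem_erase h)
  have hiI : i ∈ I₀ := Finset.mem_insert_self _ _
  have hjI : j ∉ I₀ := by simp [hI₀def, hij.symm]
  have hEq : delta J + stdBasis n i - stdBasis n j = delta I₀ := by
    funext t
    simp only [Pi.add_apply, Pi.sub_apply, delta, stdBasis, hI₀def, Finset.mem_insert,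
      Finset.mem_erase]
    by_cases h1 : t = i
    · subst h1; simp [hi, hij]
    · by_cases h2 : t = j
      · subst h2; simp [hj, h1, hij.symm]
      · simp [h1, h2]
  have hIJ : I₀ \ J = {i} := by
    ext t
    simp only [Finset.mem_sdiff, hI₀def, Finset.mem_insert, Finset.mem_erase,
      Finset.mem_singleton]
    constructor
    · rintro ⟨rfl | ⟨-, htJ⟩, htn⟩
      · rfl
      · exact absurd htJ htn
    · rintro rfl
      exact ⟨Or.inl rfl, hi⟩
  have hJI : J \ I₀ = {j} := by
    ext t
    simp only [Finset.mem_sdiff, hI₀def, Finset.mem_insert, Finset.mem_erase,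
      Finset.mem_singleton]
    constructor
    · rintro ⟨htJ, htn⟩
      by_contra hne
      exact htn (Or.inr ⟨hne, htJ⟩)
    · rintro rfl
      refine ⟨hj, ?_⟩
      rintro (rfl | ⟨hne, -⟩)
      · exact hi hj
      · exact hne rfl
  constructor
  · intro h
    rw [hEq] at h
    have h' : delta I₀ ∈ delta '' (M : Set (Finset (Fin n))) :=
      extremePoints_convexHull_subset h
    obtain ⟨C, hC, hCeq⟩ := h'
    have hI₀M : I₀ ∈ M := delta_injective hCeq ▸ hC
    show (SimpleGraph.fromRel _).Adj i j
    rw [SimpleGraph.fromRel_adj]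
    exact ⟨hij, Or.inl ⟨I₀, hI₀M, edge_of_exchange M hcard J hJ i j hi hj hI₀M,
      i, j, hIJ, hJI, rfl⟩⟩
  · intro h
    rw [hEq]
    have h' : i ≠ j ∧ (stdBasis n i - stdBasis n j ∈ Rv n M J ∨
        stdBasis n j - stdBasis n i ∈ Rv n M J) := by
      rw [Gamma, SimpleGraph.fromRel_adj] at h
      exact h
    rcases h'.2 with hR | hR
    · obtain ⟨I, hIM, -, a, b, hIJa, hJIb, heq⟩ := hR
      have haJ : a ∉ J := by
        have : a ∈ I \ J := hIJa ▸ Finset.mem_singleton_self a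
        exact (Finset.mem_sdiff.1 this).2
      have hbJ : b ∈ J := by
        have : b ∈ J \ I := hJIb ▸ Finset.mem_singleton_self b
        exact (Finset.mem_sdiff.1 this).1
      have hab : a ≠ b := fun hE => haJ (hE ▸ hbJ)
      have hai : a = i := by
        by_contra h1
        have ha := congrFun heq a
        simp only [Pi.sub_apply, stdBasis] at ha
        by_cases h2 : a = j
        · exact haJ (h2 ▸ hj)
        · norm_num [h1, h2, hab] at ha
      have hbj : b = j := by
        by_contra h1
        have hb := congrFun heq b
        simp only [Pi.sub_apply, stdBasis] at hb
        by_cases h2 : b = i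
        · exact hi (h2 ▸ hbJ)
        · norm_num [h1, h2, Ne.symm hab] at hb
      have hIJa' : I \ J = {i} := by rw [hIJa, hai]
      have hJIb' : J \ I = {j} := by rw [hJIb, hbj]
      have h3 : I ∩ J = J.erase j := by
        rw [Finset.inter_comm, ← Finset.sdiff_sdiff_self_left J I, hJIb', ← Finset.erase_eq]
      have h4 : I = I₀ := by
        have h5 := (Finset.sdiff_union_inter I J).symm
        rw [hIJa', h3, ← Finset.insert_eq] at h5
        rw [h5, hI₀def]
      exact delta_extreme M hcard I₀ (h4 ▸ hIM)
    · exfalso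
      obtain ⟨I, hIM, -, a, b, hIJa, hJIb, heq⟩ := hR
      have haJ : a ∉ J := by
        have : a ∈ I \ J := by rw [hIJa]; exact Finset.mem_singleton_self a
        exact (Finset.mem_sdiff.1 this).2
      have hbJ : b ∈ J := by
        have : b ∈ J \ I := hJIb ▸ Finset.mem_singleton_self b
        exact (Finset.mem_sdiff.1 this).1
      have hab : a ≠ b := fun hE => haJ (hE ▸ hbJ)
      by_cases h2 : a = j
      · exact haJ (h2 ▸ hj)
      · have ha := congrFun heq a
        simp only [Pi.sub_apply, stdBasis] at ha
        by_cases h3 : a = i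
        · rw [h3] at hab
          norm_num [h2, h3, hij, hab] at ha
        · norm_num [h2, h3, hab] at ha
end

section
/- Every face of the matroid polytope Δ_M of a matroid M of rank k on a finite set S is itself the matroid polytope of some matroid of rank k on S. -/
open Finset Module

open Set in
/-- Symmetric basis exchange for matroids, derived from the closure API. -/
lemma matroid_symm_exchange {α : Type*} {M : Matroid α} {B₁ B₂ : Set α} (hB₁ : M.IsBase B₁)
    (hB₂ : M.IsBase B₂) {e : α} (heB₁ : e ∈ B₁) (heB₂ : e ∉ B₂) :
    ∃ f, f ∈ B₂ ∧ f ∉ B₁ ∧ M.IsBase (insert f (B₁ \ {e})) ∧ M.IsBase (insert e (B₂ \ {f})) := by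
  have hB₁E := hB₁.subset_ground
  have hB₂E := hB₂.subset_ground
  set X := M.closure (B₁ \ {e}) with hXdef
  have heX : e ∉ X := hB₁.indep.notMem_closure_diff_of_mem heB₁
  have hsubX : B₁ \ {e} ⊆ X := M.subset_closure _ (diff_subset.trans hB₁E)
  have hXX : M.closure X = X := M.closure_closure _
  have hBs : ∃ f ∈ B₂, f ∉ X := by
    by_contra h
    push_neg at h
    have h2 : M.closure B₂ ⊆ X := by
      rw [← hXX]; exact M.closure_subset_closure h
    exact heX (h2 (by rw [hB₂.closure_eq]; exact hB₁E heB₁))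
  have hkey : ∃ f, (f ∈ B₂ ∧ f ∉ X) ∧ e ∉ M.closure (B₂ \ {f}) := by
    by_contra h
    push_neg at h
    set Bs : Set α := {f | f ∈ B₂ ∧ f ∉ X} with hBsdef
    obtain ⟨f₀, hf₀⟩ := hBs
    have hne : ((fun f => B₂ \ {f}) '' Bs).Nonempty := ⟨_, ⟨f₀, hf₀, rfl⟩⟩
    have hcl := hB₂.indep.closure_sInter_eq_biInter_closure_of_forall_subset hne
      (by rintro _ ⟨f, hf, rfl⟩; exact diff_subset)
    have hf₀' : f₀ ∈ Bs := hf₀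
    have hsInter : ⋂₀ ((fun f => B₂ \ {f}) '' Bs) = B₂ \ Bs := by
      ext x
      constructor
      · intro hx
        have hx' : ∀ f ∈ Bs, x ∈ B₂ \ {f} := fun f hf =>
          Set.mem_sInter.1 hx _ ⟨f, hf, rfl⟩
        refine ⟨(hx' f₀ hf₀').1, fun hxBs => (hx' x hxBs).2 rfl⟩
      · rintro ⟨hxB₂, hxBs⟩
        refine Set.mem_sInter.2 ?_
        rintro Y ⟨f, hf, rfl⟩
        refine ⟨hxB₂, fun hxf => hxBs ?_⟩
        rw [Set.mem_singleton_iff] at hxf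
        rw [hxf]
        exact hf
    have heIn : e ∈ M.closure (B₂ \ Bs) := by
      rw [← hsInter, hcl]
      refine Set.mem_iInter₂.2 ?_
      rintro Y ⟨f, hf, rfl⟩
      exact h f hf
    have hsub2 : B₂ \ Bs ⊆ X := by
      intro x hx
      by_contra hxX
      exact hx.2 ⟨hx.1, hxX⟩
    exact heX (hXX ▸ M.closure_subset_closure hsub2 heIn)
  obtain ⟨f, ⟨hfB₂, hfX⟩, hecl⟩ := hkey
  have hfB₁ : f ∉ B₁ := by
    intro hf
    exact hfX (hsubX ⟨hf, by simp only [mem_singleton_iff]; rintro rfl; exact heB₂ hfB₂⟩)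
  have hind₁ : M.Indep (insert f (B₁ \ {e})) := by
    rw [(hB₁.indep.subset diff_subset).insert_indep_iff_of_notMem (fun h => hfB₁ h.1)]
    exact ⟨hB₂E hfB₂, hfX⟩
  have hind₂ : M.Indep (insert e (B₂ \ {f})) := by
    rw [(hB₂.indep.subset diff_subset).insert_indep_iff_of_notMem (fun h => heB₂ h.1)]
    exact ⟨hB₁E heB₁, hecl⟩
  exact ⟨f, hfB₂, hfB₁, hB₁.exchange_isBase_of_indep hfB₁ hind₁,
    hB₂.exchange_isBase_of_indep heB₂ hind₂⟩

/-- Symmetric basis exchange for `IsMatroid` at the finset level. -/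
lemma finset_symm_exchange {S : Type} [Fintype S] [DecidableEq S] {k : ℕ}
    {M : Finset (Finset S)} (hM : IsMatroid k M) {I J : Finset S} (hI : I ∈ M) (hJ : J ∈ M)
    {i : S} (hiI : i ∈ I) (hiJ : i ∉ J) :
    ∃ j, j ∈ J ∧ j ∉ I ∧ insert j (I.erase i) ∈ M ∧ insert i (J.erase j) ∈ M := by
  classical
  set Base : Set S → Prop := fun B => ∃ A ∈ M, (A : Set S) = B with hBasedef
  have hexch : Matroid.ExchangeProperty Base := by
    rintro _ _ ⟨I₁, hI₁, rfl⟩ ⟨J₁, hJ₁, rfl⟩ a ha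
    rw [Set.mem_diff, Finset.mem_coe, Finset.mem_coe] at ha
    have hne : I₁ ≠ J₁ := fun h => ha.2 (h ▸ ha.1)
    obtain ⟨b, hb, hbM⟩ := hM.2.2 I₁ hI₁ J₁ hJ₁ hne a (Finset.mem_sdiff.2 ha)
    rw [Finset.mem_sdiff] at hb
    refine ⟨b, ⟨hb.1, hb.2⟩, insert b (I₁.erase a), hbM, ?_⟩
    simp [Finset.coe_insert, Finset.coe_erase]
  obtain ⟨A₀, hA₀⟩ := hM.1
  set Mat : Matroid S := Matroid.ofIsBaseOfFinite Set.finite_univ Base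
    ⟨(A₀ : Set S), A₀, hA₀, rfl⟩ hexch (fun B _ => Set.subset_univ B) with hMatdef
  have hbase : ∀ (A : Finset S), Mat.IsBase ↑A ↔ A ∈ M := by
    intro A
    have : Mat.IsBase = Base := rfl
    rw [this]
    constructor
    · rintro ⟨A', hA', h⟩
      rwa [← Finset.coe_injective h]
    · intro h; exact ⟨A, h, rfl⟩
  obtain ⟨f, hfJ, hfI, hb1, hb2⟩ := matroid_symm_exchange ((hbase I).2 hI) ((hbase J).2 hJ)
    (Finset.mem_coe.2 hiI) (fun h => hiJ (Finset.mem_coe.1 h))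
  rw [Finset.mem_coe] at hfJ hfI
  have he1 : (insert f ((I : Set S) \ {i})) = ((insert f (I.erase i) : Finset S) : Set S) := by
    simp [Finset.coe_insert, Finset.coe_erase]
  have he2 : (insert i ((J : Set S) \ {f})) = ((insert i (J.erase f) : Finset S) : Set S) := by
    simp [Finset.coe_insert, Finset.coe_erase]
  rw [he1, hbase] at hb1
  rw [he2, hbase] at hb2
  exact ⟨f, hfJ, hfI, hb1, hb2⟩

/-- The bases of maximal weight form a matroid of the same rank. -/
lemma max_bases_isMatroid {S : Type} [Fintype S] [DecidableEq S] {k : ℕ}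
    {M : Finset (Finset S)} (hM : IsMatroid k M) (w : S → ℝ)
    (M' : Finset (Finset S))
    (hM' : ∀ I, I ∈ M' ↔ I ∈ M ∧ ∀ J ∈ M, ∑ s ∈ J, w s ≤ ∑ s ∈ I, w s) :
    IsMatroid k M' := by
  have key : ∀ (A : Finset S) (a b : S), a ∈ A → b ∉ A →
      ∑ s ∈ insert b (A.erase a), w s = ∑ s ∈ A, w s - w a + w b := by
    intro A a b ha hb
    rw [Finset.sum_insert (fun h => hb (Finset.mem_of_mem_erase h)),
      Finset.sum_erase_eq_sub ha]
    ring
  refine ⟨?_, ?_, ?_⟩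
  · obtain ⟨I₀, hI₀, hmax⟩ := M.exists_max_image (fun I => ∑ s ∈ I, w s) hM.1
    exact ⟨I₀, (hM' I₀).2 ⟨hI₀, hmax⟩⟩
  · exact fun I hI => hM.2.1 I ((hM' I).1 hI).1
  · intro I hI J hJ hne i hi
    rw [Finset.mem_sdiff] at hi
    obtain ⟨hIM, hImax⟩ := (hM' I).1 hI
    obtain ⟨hJM, hJmax⟩ := (hM' J).1 hJ
    obtain ⟨j, hjJ, hjI, hI'M, hJ'M⟩ := finset_symm_exchange hM hIM hJM hi.1 hi.2
    have h1 : ∑ s ∈ I, w s - w i + w j ≤ ∑ s ∈ I, w s := by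
      rw [← key I i j hi.1 hjI]; exact hImax _ hI'M
    have h2 : ∑ s ∈ J, w s - w j + w i ≤ ∑ s ∈ J, w s := by
      rw [← key J j i hjJ hi.2]; exact hJmax _ hJ'M
    have hwij : w j = w i := by linarith
    refine ⟨j, Finset.mem_sdiff.2 ⟨hjJ, hjI⟩, (hM' _).2 ⟨hI'M, fun K hK => ?_⟩⟩
    rw [key I i j hi.1 hjI, hwij]
    have := hImax K hK
    linarith

/-- Every (nonempty) face of the matroid polytope of a matroid of rank `k` on `S` is itself
the matroid polytope of some matroid of rank `k` on `S`. -/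
theorem face_of_matroid_polytope_is_matroid_polytope
    (S : Type) [Fintype S] [DecidableEq S] (k : ℕ)
    (M : Finset (Finset S)) (hM : IsMatroid k M)
    (F : Set (S → ℝ)) (hF : IsExposed ℝ (matroidPolytope M) F) (hFne : F.Nonempty) :
    ∃ M' : Finset (Finset S), IsMatroid k M' ∧ F = matroidPolytope M' := by
  classical
  obtain ⟨l, hFl⟩ := hF hFne
  set w : S → ℝ := fun s => l (Pi.single s 1) with hwdef
  have hdelta : ∀ B : Finset S, delta B = ∑ s ∈ B, Pi.single s (1 : ℝ) := by
    intro B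
    funext i
    simp only [delta, Finset.sum_apply, Pi.single_apply]
    rw [Finset.sum_ite_eq B i (fun _ => (1 : ℝ))]
  have hld : ∀ B : Finset S, l (delta B) = ∑ s ∈ B, w s := by
    intro B
    rw [hdelta, map_sum]
  set M' := M.filter (fun I => ∀ J ∈ M, ∑ s ∈ J, w s ≤ ∑ s ∈ I, w s) with hM'def
  have hM'mem : ∀ I, I ∈ M' ↔ I ∈ M ∧ ∀ J ∈ M, ∑ s ∈ J, w s ≤ ∑ s ∈ I, w s := by
    intro I
    simp [hM'def]
  have hM'mat : IsMatroid k M' := max_bases_isMatroid hM w M' hM'mem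
  obtain ⟨I₀, hI₀M, hI₀max⟩ := M.exists_max_image (fun I => ∑ s ∈ I, w s) hM.1
  set m : ℝ := ∑ s ∈ I₀, w s with hmdef
  have hPle : ∀ x ∈ matroidPolytope M, l x ≤ m := by
    intro x hx
    have hsub : matroidPolytope M ⊆ {x | l x ≤ m} := by
      apply convexHull_min ?_ (convex_halfSpace_le ⟨l.map_add, l.map_smul⟩ m)
      rintro _ ⟨I, hI, rfl⟩
      simpa only [Set.mem_setOf_eq, hld] using hI₀max I hI
    exact hsub hx
  have hI₀P : delta I₀ ∈ matroidPolytope M :=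
    subset_convexHull ℝ _ ⟨I₀, hI₀M, rfl⟩
  refine ⟨M', hM'mat, ?_⟩
  rw [hFl]
  show _ = convexHull ℝ (delta '' (M' : Set (Finset S)))
  apply Set.Subset.antisymm
  · rintro x ⟨hxP, hxmax⟩
    have hlx : l x = m :=
      le_antisymm (hPle x hxP) (by simpa only [hld] using hxmax (delta I₀) hI₀P)
    set T : Finset (S → ℝ) := M.image delta with hTdef
    have hxT : x ∈ convexHull ℝ (T : Set (S → ℝ)) := by
      have : delta '' (M : Set (Finset S)) = (T : Set (S → ℝ)) := (Finset.coe_image).symm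
      rw [matroidPolytope, this] at hxP
      exact hxP
    rw [Finset.convexHull_eq] at hxT
    obtain ⟨wt, hwt0, hwt1, hwtx⟩ := hxT
    have hyle : ∀ y ∈ T, l y ≤ m := by
      intro y hy
      obtain ⟨I, hI, rfl⟩ := Finset.mem_image.1 hy
      simpa only [hld] using hI₀max I hI
    have hx' : ∑ y ∈ T, wt y • y = x := by
      rw [← hwtx, Finset.centerMass_eq_of_sum_1 _ id hwt1]
      rfl
    have hlx' : ∑ y ∈ T, wt y * l y = m := by
      rw [← hlx, ← hx', map_sum]
      simp [smul_eq_mul]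
    have hzero : ∀ y ∈ T, wt y * (m - l y) = 0 := by
      rw [← Finset.sum_eq_zero_iff_of_nonneg
        (fun y hy => mul_nonneg (hwt0 y hy) (sub_nonneg.2 (hyle y hy)))]
      have : ∑ y ∈ T, wt y * (m - l y)
          = (∑ y ∈ T, wt y) * m - ∑ y ∈ T, wt y * l y := by
        rw [Finset.sum_mul, ← Finset.sum_sub_distrib]
        congr 1
        funext y
        ring
      rw [this, hwt1, hlx']
      ring
    have hsupp : ∀ y ∈ T, wt y ≠ 0 → l y = m := by
      intro y hy hne
      rcases mul_eq_zero.1 (hzero y hy) with h | h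
      · exact absurd h hne
      · linarith [sub_eq_zero.1 h]
    rw [← hwtx, ← Finset.centerMass_filter_ne_zero (w := wt) (z := id)]
    apply Finset.centerMass_mem_convexHull
    · exact fun y hy => hwt0 y (Finset.mem_filter.1 hy).1
    · rw [Finset.sum_filter_ne_zero, hwt1]
      norm_num
    · intro y hy
      obtain ⟨hyT, hyne⟩ := Finset.mem_filter.1 hy
      obtain ⟨I, hIM, rfl⟩ := Finset.mem_image.1 hyT
      have hlI : ∑ s ∈ I, w s = m := by
        rw [← hld]; exact hsupp _ hyT hyne
      refine ⟨I, ?_, rfl⟩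
      exact (hM'mem I).2 ⟨hIM, fun J hJ => by rw [hlI]; exact hI₀max J hJ⟩
  · apply convexHull_min
    · rintro _ ⟨I, hIM', rfl⟩
      obtain ⟨hIM, hImax⟩ := (hM'mem I).1 hIM'
      have hP : delta I ∈ matroidPolytope M :=
        subset_convexHull ℝ _ ⟨I, hIM, rfl⟩
      refine ⟨hP, fun y hy => ?_⟩
      calc l y ≤ m := hPle y hy
        _ ≤ l (delta I) := by rw [hld]; exact hImax I₀ hI₀M
    · exact hFl ▸ hF.convex (convex_convexHull ℝ _)
end

section
/- Every two-dimensional matroid polytope has exactly 3 or exactly 4 vertices; that is, every two-dimensional matroid polytope is combinatorially equivalent to a triangle or a square. -/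
open Finset Module

namespace TwoDimAux

variable {S : Type} [DecidableEq S]

lemma delta_inj : Function.Injective (delta (S := S)) := by
  intro A B h
  ext x
  have hx := congrFun h x
  by_cases hA : x ∈ A <;> by_cases hB : x ∈ B <;> simp [delta, hA, hB] at hx ⊢

/-- The unit coordinate vector. -/
def ev (a : S) : S → ℝ := fun x => if x = a then 1 else 0

lemma delta_step {I : Finset S} {i j : S} (hi : i ∈ I) (hj : j ∉ I) :
    delta (insert j (I.erase i)) - delta I = ev j - ev i := by
  have hij : j ≠ i := fun h => hj (h ▸ hi)
  funext x
  simp only [delta, ev, Pi.sub_apply, Finset.mem_insert, Finset.mem_erase]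
  by_cases hxj : x = j
  · subst hxj
    simp [hij, hj]
  · by_cases hxi : x = i
    · subst hxi
      simp [hxj, hi, fun h => hxj h]
    · by_cases hxI : x ∈ I <;> simp [hxj, hxi, hxI]

/-- An exchange pair of the matroid `M`. -/
def MPair (M : Finset (Finset S)) (a b : S) : Prop :=
  ∃ I ∈ M, a ∈ I ∧ b ∉ I ∧ insert b (I.erase a) ∈ M

lemma MPair.ne {M : Finset (Finset S)} {a b : S} (h : MPair M a b) : a ≠ b := by
  obtain ⟨I, _, haI, hbI, _⟩ := h
  exact fun hab => hbI (hab ▸ haI)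

/-- The set of exchange vectors of `M`. -/
def pvSet (M : Finset (Finset S)) : Set (S → ℝ) := {v | ∃ a b, MPair M a b ∧ v = ev b - ev a}

/-- The span of the exchange vectors of `M`. -/
noncomputable def V (M : Finset (Finset S)) : Submodule ℝ (S → ℝ) := Submodule.span ℝ (pvSet M)

/-- A single exchange step between bases of `M`. -/
def Step (M : Finset (Finset S)) (I J : Finset S) : Prop :=
  I ∈ M ∧ J ∈ M ∧ ∃ a b, a ∈ I ∧ b ∉ I ∧ MPair M a b ∧ J = insert b (I.erase a)

lemma chain {k : ℕ} {M : Finset (Finset S)} (hM : IsMatroid k M) :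
    ∀ I ∈ M, ∀ J ∈ M, Relation.ReflTransGen (Step M) I J := by
  have key : ∀ n I J, I ∈ M → J ∈ M → (I \ J).card = n →
      Relation.ReflTransGen (Step M) I J := by
    intro n
    induction n using Nat.strong_induction_on with
    | _ n ih =>
      intro I J hI hJ hcard
      by_cases hIJ : I = J
      · subst hIJ; exact Relation.ReflTransGen.refl
      · have hne : (I \ J).Nonempty := by
          rw [Finset.sdiff_nonempty]
          intro hsub
          exact hIJ (Finset.eq_of_subset_of_card_le hsub
            (by rw [hM.2.1 I hI, hM.2.1 J hJ]))
        obtain ⟨i, hi⟩ := hne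
        obtain ⟨j, hj, hI'⟩ := hM.2.2 I hI J hJ hIJ i hi
        have hiI : i ∈ I := (Finset.mem_sdiff.1 hi).1
        have hjJ : j ∈ J := (Finset.mem_sdiff.1 hj).1
        have hjI : j ∉ I := (Finset.mem_sdiff.1 hj).2
        have hstep : Step M I (insert j (I.erase i)) :=
          ⟨hI, hI', i, j, hiI, hjI, ⟨I, hI, hiI, hjI, hI'⟩, rfl⟩
        have hdiff : insert j (I.erase i) \ J = (I \ J).erase i := by
          ext x
          simp only [Finset.mem_sdiff, Finset.mem_insert, Finset.mem_erase]
          constructor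
          · rintro ⟨h1 | ⟨hxi, hxI⟩, hxJ⟩
            · exact absurd (h1 ▸ hjJ) hxJ
            · exact ⟨hxi, hxI, hxJ⟩
          · rintro ⟨hxi, hxI, hxJ⟩
            exact ⟨Or.inr ⟨hxi, hxI⟩, hxJ⟩
        have hlt : (insert j (I.erase i) \ J).card < n := by
          rw [hdiff, Finset.card_erase_of_mem hi, hcard]
          have : 0 < n := hcard ▸ Finset.card_pos.2 ⟨i, hi⟩
          omega
        exact Relation.ReflTransGen.head hstep (ih _ hlt _ _ hI' hJ rfl)
  intro I hI J hJ
  exact key _ I J hI hJ rfl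

lemma diff_mem_V {M : Finset (Finset S)} {I J : Finset S}
    (h : Relation.ReflTransGen (Step M) I J) : delta J - delta I ∈ V M := by
  induction h with
  | refl => simp
  | tail _ hbc ih =>
    obtain ⟨hb, hc, a', b', ha', hb', hpair, hceq⟩ := hbc
    rename_i b c _
    have hv : delta c - delta b = ev b' - ev a' := by rw [hceq]; exact delta_step ha' hb'
    have hmem : delta c - delta b ∈ V M := by
      rw [hv]; exact Submodule.subset_span ⟨a', b', hpair, rfl⟩
    have : delta c - delta I = (delta c - delta b) + (delta b - delta I) := by abel
    rw [this]
    exact Submodule.add_mem _ hmem ih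

lemma agree_outside {M : Finset (Finset S)} {T : Finset S}
    (hT : ∀ a b, MPair M a b → a ∈ T ∧ b ∈ T) {I J : Finset S}
    (h : Relation.ReflTransGen (Step M) I J) : ∀ x ∉ T, (x ∈ I ↔ x ∈ J) := by
  induction h with
  | refl => exact fun x _ => Iff.rfl
  | tail _ hbc ih =>
    intro x hx
    obtain ⟨hb, hc, a', b', ha', hb', hpair, hceq⟩ := hbc
    obtain ⟨haT, hbT⟩ := hT _ _ hpair
    have hxa : x ≠ a' := fun h => hx (h ▸ haT)
    have hxb : x ≠ b' := fun h => hx (h ▸ hbT)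
    rw [ih x hx, hceq]
    simp [Finset.mem_insert, Finset.mem_erase, hxa, hxb]

lemma card_inter_const {M : Finset (Finset S)} {U : Finset S}
    (hU : ∀ a b, MPair M a b → (a ∈ U ↔ b ∈ U)) {I J : Finset S}
    (h : Relation.ReflTransGen (Step M) I J) : (I ∩ U).card = (J ∩ U).card := by
  induction h with
  | refl => rfl
  | tail _ hbc ih =>
    obtain ⟨hb, hc, a', b', ha', hb', hpair, hceq⟩ := hbc
    rename_i b c _
    rw [ih]
    by_cases haU : a' ∈ U
    · have hbU : b' ∈ U := (hU _ _ hpair).1 haU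
      have h1 : c ∩ U = insert b' ((b ∩ U).erase a') := by
        ext x
        simp only [hceq, Finset.mem_inter, Finset.mem_insert, Finset.mem_erase]
        constructor
        · rintro ⟨h1 | ⟨hxa, hxb⟩, hxU⟩
          · exact Or.inl h1
          · exact Or.inr ⟨hxa, hxb, hxU⟩
        · rintro (rfl | ⟨hxa, hxb, hxU⟩)
          · exact ⟨Or.inl rfl, hbU⟩
          · exact ⟨Or.inr ⟨hxa, hxb⟩, hxU⟩
      rw [h1, Finset.card_insert_of_notMem (by
          simp only [Finset.mem_erase, Finset.mem_inter]
          rintro ⟨-, hbb, -⟩; exact hb' hbb),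
        Finset.card_erase_of_mem (Finset.mem_inter.2 ⟨ha', haU⟩)]
      have : 0 < (b ∩ U).card := Finset.card_pos.2 ⟨a', Finset.mem_inter.2 ⟨ha', haU⟩⟩
      omega
    · have hbU : b' ∉ U := fun h => haU ((hU _ _ hpair).2 h)
      have h1 : c ∩ U = b ∩ U := by
        ext x
        simp only [hceq, Finset.mem_inter, Finset.mem_insert, Finset.mem_erase]
        constructor
        · rintro ⟨h1 | ⟨hxa, hxb⟩, hxU⟩
          · exact absurd (h1 ▸ hxU) hbU
          · exact ⟨hxb, hxU⟩
        · rintro ⟨hxb, hxU⟩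
          have hxa : x ≠ a' := fun h => haU (h ▸ hxU)
          exact ⟨Or.inr ⟨hxa, hxb⟩, hxU⟩
      rw [h1]

lemma mem_cube {M : Finset (Finset S)} {w : S → ℝ} (hw : w ∈ matroidPolytope M) :
    ∀ s, 0 ≤ w s ∧ w s ≤ 1 := by
  have hsub : matroidPolytope M ⊆ {v : S → ℝ | ∀ s, 0 ≤ v s ∧ v s ≤ 1} := by
    apply convexHull_min
    · rintro v ⟨B, _, rfl⟩ s
      by_cases hs : s ∈ B <;> simp [delta, hs]
    · intro p hp q hq t1 t2 ht1 ht2 ht s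
      obtain ⟨hp0, hp1⟩ := hp s
      obtain ⟨hq0, hq1⟩ := hq s
      constructor
      · have : (t1 • p + t2 • q) s = t1 * p s + t2 * q s := rfl
        rw [this]; nlinarith
      · have : (t1 • p + t2 • q) s = t1 * p s + t2 * q s := rfl
        rw [this]; nlinarith
  exact hsub hw

lemma extreme_eq (M : Finset (Finset S)) :
    Set.extremePoints ℝ (matroidPolytope M) = delta '' (M : Set (Finset S)) := by
  apply Set.Subset.antisymm
  · exact extremePoints_convexHull_subset
  · rintro x ⟨I, hI, rfl⟩
    rw [mem_extremePoints]
    refine ⟨subset_convexHull ℝ _ ⟨I, hI, rfl⟩, ?_⟩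
    intro y hy z hz hseg
    obtain ⟨t1, t2, ht1, ht2, hts, heq⟩ := hseg
    have hy' := mem_cube hy
    have hz' := mem_cube hz
    have key : ∀ s, y s = delta I s ∧ z s = delta I s := by
      intro s
      have hcoord : t1 * y s + t2 * z s = delta I s := congrFun heq s
      obtain ⟨hy0, hy1⟩ := hy' s
      obtain ⟨hz0, hz1⟩ := hz' s
      by_cases hs : s ∈ I
      · have hd : delta I s = 1 := by simp [delta, hs]
        rw [hd] at hcoord ⊢
        constructor <;> nlinarith
      · have hd : delta I s = 0 := by simp [delta, hs]
        rw [hd] at hcoord ⊢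
        constructor <;> nlinarith
    exact ⟨funext fun s => (key s).1, funext fun s => (key s).2⟩

lemma indep2 {a b c d : S} (hab : a ≠ b) (hcd : c ≠ d)
    (h1 : ¬(c = a ∧ d = b)) (h2 : ¬(c = b ∧ d = a)) :
    ∀ (α β : ℝ), α • (ev b - ev a) + β • (ev d - ev c) = 0 → α = 0 ∧ β = 0 := by
  intro α β h
  have ha := congrFun h a
  have hb := congrFun h b
  have hc := congrFun h c
  have hd := congrFun h d
  simp only [ev, Pi.add_apply, Pi.smul_apply, Pi.sub_apply, smul_eq_mul,
    Pi.zero_apply] at ha hb hc hd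
  by_cases hca : c = a <;> by_cases hcb : c = b <;> by_cases hda : d = a <;>
    by_cases hdb : d = b <;> subst_vars <;> simp_all

lemma cross_false {a b c d x y : S} (hab : a ≠ b) (hca : c ≠ a) (hcb : c ≠ b)
    (hda : d ≠ a) (hdb : d ≠ b)
    (hx : x = a ∨ x = b) (hy : y = c ∨ y = d) {s t : ℝ}
    (hst : s • (ev b - ev a) + t • (ev d - ev c) = ev y - ev x) : False := by
  have h1 : a ≠ c := hca.symm
  have h2 : a ≠ d := hda.symm
  have h3 : b ≠ c := hcb.symm
  have h4 : b ≠ d := hdb.symm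
  have h5 : b ≠ a := hab.symm
  have hA := congrFun hst a
  have hB := congrFun hst b
  simp only [ev, Pi.add_apply, Pi.smul_apply, Pi.sub_apply, smul_eq_mul] at hA hB
  rcases hx with rfl | rfl <;> rcases hy with rfl | rfl <;> simp_all

lemma choose_two_le (n : ℕ) : Nat.choose 2 n ≤ 2 := by
  rcases n with _ | _ | _ | n
  · decide
  · decide
  · decide
  · rw [Nat.choose_eq_zero_of_lt (by omega)]; omega

lemma choose_three_le (n : ℕ) : Nat.choose 3 n ≤ 3 := by
  rcases n with _ | _ | _ | _ | n
  · decide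
  · decide
  · decide
  · decide
  · rw [Nat.choose_eq_zero_of_lt (by omega)]; omega

lemma card_three (x y z : S) : ({x, y, z} : Finset S).card ≤ 3 := by
  apply le_trans (Finset.card_insert_le _ _)
  have : ({y, z} : Finset S).card ≤ 2 := by
    apply le_trans (Finset.card_insert_le _ _)
    simp
  omega

end TwoDimAux

open TwoDimAux in
set_option maxHeartbeats 1000000 in
/-- Every two-dimensional matroid polytope has exactly `3` or exactly `4` vertices, i.e. it is
combinatorially equivalent to a triangle or a square. -/
theorem two_dimensional_matroid_polytope_triangle_or_square
    (S : Type) [Fintype S] [DecidableEq S] (k : ℕ)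
    (M : Finset (Finset S)) (hM : IsMatroid k M)
    (hdim : polyDim (matroidPolytope M) = 2) :
    (Set.extremePoints ℝ (matroidPolytope M)).ncard = 3 ∨
    (Set.extremePoints ℝ (matroidPolytope M)).ncard = 4 := by
  classical
  obtain ⟨I0, hI0⟩ := hM.1
  -- the number of vertices is the number of bases
  have hvert : (Set.extremePoints ℝ (matroidPolytope M)).ncard = M.card := by
    rw [extreme_eq, Set.ncard_image_of_injective _ delta_inj, Set.ncard_coe_finset]
  rw [hvert]
  -- the dimension hypothesis in terms of the vector span
  have hVS : finrank ℝ (vectorSpan ℝ (delta '' (M : Set (Finset S)))) = 2 := by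
    rw [polyDim, matroidPolytope, affineSpan_convexHull, direction_affineSpan] at hdim
    exact hdim
  -- the span of the exchange vectors equals the vector span
  have hVeq : V M = vectorSpan ℝ (delta '' (M : Set (Finset S))) := by
    apply le_antisymm
    · rw [V, Submodule.span_le]
      rintro v ⟨a, b, ⟨I, hI, haI, hbI, hI'⟩, rfl⟩
      have := delta_step haI hbI
      rw [← this, ← vsub_eq_sub]
      exact vsub_mem_vectorSpan ℝ ⟨_, hI', rfl⟩ ⟨_, hI, rfl⟩
    · have hmem0 : delta I0 ∈ delta '' (M : Set (Finset S)) :=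
        ⟨I0, Finset.mem_coe.2 hI0, rfl⟩
      rw [vectorSpan_eq_span_vsub_set_right ℝ hmem0, Submodule.span_le]
      rintro v ⟨q, ⟨J, hJ, rfl⟩, rfl⟩
      simpa [vsub_eq_sub] using diff_mem_V (chain hM I0 hI0 J hJ)
  have hV2 : finrank ℝ (V M) = 2 := by rw [hVeq]; exact hVS
  -- lower bound : at least 3 bases
  have h3 : 3 ≤ M.card := by
    by_contra hlt
    push_neg at hlt
    have h012 : M.card = 0 ∨ M.card = 1 ∨ M.card = 2 := by omega
    rcases h012 with h0 | h1 | h2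
    · rw [Finset.card_eq_zero] at h0
      subst h0
      rw [show ((∅ : Finset (Finset S)) : Set (Finset S)) = ∅ from Finset.coe_empty,
        Set.image_empty, vectorSpan_empty] at hVS
      rw [finrank_bot ℝ (S → ℝ)] at hVS
      omega
    · rw [Finset.card_eq_one] at h1
      obtain ⟨I, rfl⟩ := h1
      rw [Finset.coe_singleton, Set.image_singleton, vectorSpan_singleton] at hVS
      rw [finrank_bot ℝ (S → ℝ)] at hVS
      omega
    · rw [Finset.card_eq_two] at h2
      obtain ⟨I, J, hIJ, rfl⟩ := h2
      have himg : delta '' (({I, J} : Finset (Finset S)) : Set (Finset S)) =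
          {delta I, delta J} := by
        rw [Finset.coe_insert, Finset.coe_singleton, Set.image_insert_eq, Set.image_singleton]
      rw [himg, vectorSpan_pair] at hVS
      have hle : finrank ℝ (ℝ ∙ (delta I -ᵥ delta J)) ≤ 1 := by
        by_cases hz : delta I -ᵥ delta J = 0
        · rw [hz, Submodule.span_zero_singleton]; simp
        · rw [finrank_span_singleton hz]
      omega
  -- it suffices to prove there are at most 4 bases
  suffices h4 : M.card ≤ 4 by omega
  -- there is at least one exchange pair
  have hpair1 : ∃ a b, MPair M a b := by
    by_contra hno
    push_neg at hno
    have : pvSet M = ∅ := by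
      ext v
      simp only [pvSet, Set.mem_setOf_eq, Set.mem_empty_iff_false, iff_false]
      rintro ⟨a, b, hab, -⟩
      exact hno a b hab
    rw [V, this, Submodule.span_empty] at hV2
    simp at hV2
  obtain ⟨a, b, hpab⟩ := hpair1
  have hab : a ≠ b := hpab.ne
  -- there is a second, genuinely different, exchange pair
  have hpair2 : ∃ c d, MPair M c d ∧ ¬(c = a ∧ d = b) ∧ ¬(c = b ∧ d = a) := by
    by_contra hno
    push_neg at hno
    have hsub : pvSet M ⊆ {ev b - ev a, ev a - ev b} := by
      rintro v ⟨c, d, hcd, rfl⟩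
      rcases Classical.em (c = a ∧ d = b) with ⟨rfl, rfl⟩ | hx
      · exact Set.mem_insert _ _
      · obtain ⟨rfl, rfl⟩ := hno c d hcd (fun h1 h2 => hx ⟨h1, h2⟩)
        exact Set.mem_insert_of_mem _ rfl
    have hle : V M ≤ ℝ ∙ (ev b - ev a) := by
      rw [V, Submodule.span_le]
      intro v hv
      rcases hsub hv with rfl | hv'
      · exact Submodule.mem_span_singleton_self _
      · rw [Set.mem_singleton_iff] at hv'
        subst hv'
        have : ev a - ev b = (-1 : ℝ) • (ev b - ev a) := by module
        rw [this]
        exact Submodule.smul_mem _ _ (Submodule.mem_span_singleton_self _)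
    have := Submodule.finrank_mono hle
    have hle1 : finrank ℝ (ℝ ∙ (ev b - ev a)) ≤ 1 := by
      by_cases hz : ev b - ev a = 0
      · rw [hz, Submodule.span_zero_singleton]; simp
      · rw [finrank_span_singleton hz]
    omega
  obtain ⟨c, d, hpcd, hne1, hne2⟩ := hpair2
  have hcd : c ≠ d := hpcd.ne
  -- the two exchange vectors span the whole direction space
  set v1 := ev b - ev a with hv1def
  set v2 := ev d - ev c with hv2def
  have hv1 : v1 ∈ V M := Submodule.subset_span ⟨a, b, hpab, rfl⟩
  have hv2 : v2 ∈ V M := Submodule.subset_span ⟨c, d, hpcd, rfl⟩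
  have hind : LinearIndependent ℝ ![v1, v2] :=
    LinearIndependent.pair_iff.2 (fun s t hst => indep2 hab hcd hne1 hne2 s t hst)
  have hrange : Set.range ![v1, v2] = {v1, v2} := by
    ext v
    constructor
    · rintro ⟨i, rfl⟩
      fin_cases i
      · exact Set.mem_insert _ _
      · exact Set.mem_insert_of_mem _ rfl
    · rintro (rfl | rfl)
      · exact ⟨0, rfl⟩
      · exact ⟨1, rfl⟩
  have hspan : Submodule.span ℝ {v1, v2} = V M := by
    apply Submodule.eq_of_le_of_finrank_le
    · rw [Submodule.span_le]
      rintro v (rfl | hv')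
      · exact hv1
      · rw [Set.mem_singleton_iff] at hv'; subst hv'; exact hv2
    · have hfr : finrank ℝ (Submodule.span ℝ {v1, v2}) = 2 := by
        rw [← hrange, finrank_span_eq_card hind]
        simp
      rw [hfr, hV2]
  -- every exchange pair lies in {a, b, c, d}
  have hsupp : ∀ x y, MPair M x y →
      (x = a ∨ x = b ∨ x = c ∨ x = d) ∧ (y = a ∨ y = b ∨ y = c ∨ y = d) := by
    intro x y hxy
    have hxyne : x ≠ y := hxy.ne
    have hmem : ev y - ev x ∈ Submodule.span ℝ {v1, v2} := by
      rw [hspan]; exact Submodule.subset_span ⟨x, y, hxy, rfl⟩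
    rw [Submodule.mem_span_pair] at hmem
    obtain ⟨s, t, hst⟩ := hmem
    constructor
    · by_contra hx
      push_neg at hx
      obtain ⟨hxa, hxb, hxc, hxd⟩ := hx
      have := congrFun hst x
      simp [hv1def, hv2def, ev, hxa, hxb, hxc, hxd, hxyne] at this
    · by_contra hy
      push_neg at hy
      obtain ⟨hya, hyb, hyc, hyd⟩ := hy
      have := congrFun hst y
      simp [hv1def, hv2def, ev, hya, hyb, hyc, hyd, hxyne.symm] at this
  -- case split: the two pairs share an element, or they are disjoint
  by_cases hshare : c = a ∨ c = b ∨ d = a ∨ d = b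
  -- Case A : all pairs are contained in a 3-element set T, so at most 3 bases
  · set T : Finset S := {a, b, c, d} with hTdef
    have hTcard : T.card ≤ 3 := by
      rcases hshare with rfl | rfl | rfl | rfl
      · refine le_trans (Finset.card_le_card ?_) (card_three c b d)
        intro x hx
        simp only [hTdef, Finset.mem_insert, Finset.mem_singleton] at hx ⊢
        tauto
      · refine le_trans (Finset.card_le_card ?_) (card_three a c d)
        intro x hx
        simp only [hTdef, Finset.mem_insert, Finset.mem_singleton] at hx ⊢
        tauto
      · refine le_trans (Finset.card_le_card ?_) (card_three d b c)
        intro x hx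
        simp only [hTdef, Finset.mem_insert, Finset.mem_singleton] at hx ⊢
        tauto
      · refine le_trans (Finset.card_le_card ?_) (card_three a d c)
        intro x hx
        simp only [hTdef, Finset.mem_insert, Finset.mem_singleton] at hx ⊢
        tauto
    have hT : ∀ x y, MPair M x y → x ∈ T ∧ y ∈ T := by
      intro x y hxy
      obtain ⟨hx, hy⟩ := hsupp x y hxy
      constructor <;> simp only [hTdef, Finset.mem_insert, Finset.mem_singleton] <;> tauto
    have hU : ∀ x y, MPair M x y → (x ∈ T ↔ y ∈ T) := by
      intro x y hxy
      obtain ⟨hx, hy⟩ := hT x y hxy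
      exact iff_of_true hx hy
    have hcount : M.card ≤ (T.powersetCard ((I0 ∩ T).card)).card := by
      apply Finset.card_le_card_of_injOn (fun I => I ∩ T)
      · intro I hI
        rw [Finset.mem_coe, Finset.mem_powersetCard]
        exact ⟨Finset.inter_subset_right,
          (card_inter_const hU (chain hM I0 hI0 I hI)).symm⟩
      · intro I hI J hJ heq
        simp only at heq
        ext x
        by_cases hxT : x ∈ T
        · have := Finset.ext_iff.1 heq x
          simp only [Finset.mem_inter, hxT, and_true] at this
          exact this
        · rw [← agree_outside hT (chain hM I0 hI0 I hI) x hxT,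
            ← agree_outside hT (chain hM I0 hI0 J hJ) x hxT]
    rw [Finset.card_powersetCard] at hcount
    calc M.card ≤ T.card.choose ((I0 ∩ T).card) := hcount
      _ ≤ Nat.choose 3 ((I0 ∩ T).card) := Nat.choose_le_choose _ hTcard
      _ ≤ 3 := choose_three_le _
      _ ≤ 4 := by omega
  -- Case B : the two pairs are disjoint, so at most 2 × 2 bases
  · push_neg at hshare
    obtain ⟨hca, hcb, hda, hdb⟩ := hshare
    -- each exchange pair is {a,b} or {c,d}
    have hU1 : ∀ x y, MPair M x y →
        (x ∈ ({a, b} : Finset S) ↔ y ∈ ({a, b} : Finset S)) := by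
      intro x y hxy
      obtain ⟨hx, hy⟩ := hsupp x y hxy
      have hmem : ev y - ev x ∈ Submodule.span ℝ {v1, v2} := by
        rw [hspan]; exact Submodule.subset_span ⟨x, y, hxy, rfl⟩
      rw [Submodule.mem_span_pair] at hmem
      obtain ⟨s, t, hst⟩ := hmem
      simp only [Finset.mem_insert, Finset.mem_singleton]
      constructor
      · intro hxab
        by_contra hyab
        push_neg at hyab
        have hycd : y = c ∨ y = d := by tauto
        exact cross_false hab hca hcb hda hdb hxab hycd hst
      · intro hyab
        by_contra hxab
        push_neg at hxab
        have hxcd : x = c ∨ x = d := by tauto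
        have hrev : t • (ev d - ev c) + s • (ev b - ev a) = ev y - ev x := by
          rw [← hst]; module
        exact cross_false hcd hca.symm hda.symm hcb.symm hdb.symm hxcd hyab hrev
    have hU2 : ∀ x y, MPair M x y →
        (x ∈ ({c, d} : Finset S) ↔ y ∈ ({c, d} : Finset S)) := by
      intro x y hxy
      obtain ⟨hx, hy⟩ := hsupp x y hxy
      have h1 := hU1 x y hxy
      simp only [Finset.mem_insert, Finset.mem_singleton] at h1 ⊢
      constructor
      · intro hxcd
        rcases hy with rfl | rfl | h | h
        · exact absurd (h1.2 (Or.inl rfl)) (by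
            rintro (rfl | rfl)
            · rcases hxcd with rfl | rfl
              · exact hca rfl
              · exact hda rfl
            · rcases hxcd with rfl | rfl
              · exact hcb rfl
              · exact hdb rfl)
        · exact absurd (h1.2 (Or.inr rfl)) (by
            rintro (rfl | rfl)
            · rcases hxcd with rfl | rfl
              · exact hca rfl
              · exact hda rfl
            · rcases hxcd with rfl | rfl
              · exact hcb rfl
              · exact hdb rfl)
        · exact Or.inl h
        · exact Or.inr h
      · intro hycd
        rcases hx with rfl | rfl | h | h
        · exact absurd (h1.1 (Or.inl rfl)) (by
            rintro (rfl | rfl)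
            · rcases hycd with rfl | rfl
              · exact hca rfl
              · exact hda rfl
            · rcases hycd with rfl | rfl
              · exact hcb rfl
              · exact hdb rfl)
        · exact absurd (h1.1 (Or.inr rfl)) (by
            rintro (rfl | rfl)
            · rcases hycd with rfl | rfl
              · exact hca rfl
              · exact hda rfl
            · rcases hycd with rfl | rfl
              · exact hcb rfl
              · exact hdb rfl)
        · exact Or.inl h
        · exact Or.inr h
    set U1 : Finset S := {a, b} with hU1def
    set U2 : Finset S := {c, d} with hU2def
    have hT : ∀ x y, MPair M x y → x ∈ ({a, b, c, d} : Finset S) ∧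
        y ∈ ({a, b, c, d} : Finset S) := by
      intro x y hxy
      obtain ⟨hx, hy⟩ := hsupp x y hxy
      constructor <;> simp only [Finset.mem_insert, Finset.mem_singleton] <;> tauto
    have hcount : M.card ≤
        ((U1.powersetCard ((I0 ∩ U1).card)) ×ˢ (U2.powersetCard ((I0 ∩ U2).card))).card := by
      apply Finset.card_le_card_of_injOn (fun I => (I ∩ U1, I ∩ U2))
      · intro I hI
        rw [Finset.mem_coe, Finset.mem_product]
        constructor
        · rw [Finset.mem_powersetCard]
          exact ⟨Finset.inter_subset_right,
            (card_inter_const hU1 (chain hM I0 hI0 I hI)).symm⟩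
        · rw [Finset.mem_powersetCard]
          exact ⟨Finset.inter_subset_right,
            (card_inter_const hU2 (chain hM I0 hI0 I hI)).symm⟩
      · intro I hI J hJ heq
        simp only [Prod.mk.injEq] at heq
        obtain ⟨heq1, heq2⟩ := heq
        ext x
        by_cases hx1 : x ∈ U1
        · have := Finset.ext_iff.1 heq1 x
          simp only [Finset.mem_inter, hx1, and_true] at this
          exact this
        · by_cases hx2 : x ∈ U2
          · have := Finset.ext_iff.1 heq2 x
            simp only [Finset.mem_inter, hx2, and_true] at this
            exact this
          · have hxT : x ∉ ({a, b, c, d} : Finset S) := by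
              simp only [hU1def, hU2def, Finset.mem_insert, Finset.mem_singleton] at hx1 hx2 ⊢
              tauto
            rw [← agree_outside hT (chain hM I0 hI0 I hI) x hxT,
              ← agree_outside hT (chain hM I0 hI0 J hJ) x hxT]
    rw [Finset.card_product, Finset.card_powersetCard, Finset.card_powersetCard] at hcount
    have hu1card : U1.card = 2 := Finset.card_pair hab
    have hu2card : U2.card = 2 := Finset.card_pair hcd
    rw [hu1card, hu2card] at hcount
    calc M.card ≤ Nat.choose 2 ((I0 ∩ U1).card) * Nat.choose 2 ((I0 ∩ U2).card) := hcount
      _ ≤ 2 * 2 := Nat.mul_le_mul (choose_two_le _) (choose_two_le _)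
      _ = 4 := by norm_num
end

section
/- Let A be an n×k complex matrix of rank k with rows α_1,…,α_n ∈ ℂ^k, let (J_1, J_2) be a partition of [n], and let k = k_1 + k_2 with k_1, k_2 ≥ 0. Suppose that every k-element subset B ⊆ [n] for which the rows {α_b : b ∈ B} are linearly independent satisfies |B ∩ J_1| = k_1 (and hence |B ∩ J_2| = k_2). Let V_1 be the linear span of {α_b : b ∈ J_1} and V_2 the linear span of {α_b : b ∈ J_2}. Then dim V_1 = k_1, dim V_2 = k_2, and ℂ^k = V_1 ⊕ V_2. -/
open Module

/-- **The key claim in the proof of Lemma 2.4.** Let `A` be an `n × k` complex matrix of rank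
`k` (its rows `α_1, …, α_n` span `ℂ^k`), let `(J_1, J_2)` be a partition of `[n]` and
`k = k_1 + k_2`. Suppose every `k`-element subset `B ⊆ [n]` whose corresponding rows are
linearly independent satisfies `|B ∩ J_1| = k_1`. Then the span `V_1` of the rows indexed by
`J_1` and the span `V_2` of the rows indexed by `J_2` satisfy `dim V_1 = k_1`, `dim V_2 = k_2`
and `ℂ^k = V_1 ⊕ V_2`. -/
theorem row_spans_direct_sum
    (n k k1 k2 : ℕ) (hk : k = k1 + k2)
    (A : Matrix (Fin n) (Fin k) ℂ)
    (hrank : Submodule.span ℂ (Set.range fun i : Fin n => A i) = ⊤)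
    (J1 J2 : Finset (Fin n)) (hunion : J1 ∪ J2 = Finset.univ) (hdisj : Disjoint J1 J2)
    (hB : ∀ B : Finset (Fin n), B.card = k →
      LinearIndependent ℂ (fun b : {x : Fin n // x ∈ B} => A b.1) →
      (B ∩ J1).card = k1) :
    finrank ℂ (Submodule.span ℂ ((fun i : Fin n => A i) '' (J1 : Set (Fin n)))) = k1 ∧
    finrank ℂ (Submodule.span ℂ ((fun i : Fin n => A i) '' (J2 : Set (Fin n)))) = k2 ∧
    IsCompl (Submodule.span ℂ ((fun i : Fin n => A i) '' (J1 : Set (Fin n))))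
      (Submodule.span ℂ ((fun i : Fin n => A i) '' (J2 : Set (Fin n)))) := by
  classical
  set f : Fin n → (Fin k → ℂ) := fun i => A i with hf
  have hB2 : ∀ B : Finset (Fin n), B.card = k →
      LinearIndependent ℂ (fun b : {x : Fin n // x ∈ B} => A b.1) →
      (B ∩ J2).card = k2 := by
    intro B hcard hind
    have h1 := hB B hcard hind
    have hsplit : (B ∩ J1) ∪ (B ∩ J2) = B := by
      rw [← Finset.inter_union_distrib_left, hunion, Finset.inter_univ]
    have hd : Disjoint (B ∩ J1) (B ∩ J2) :=
      (hdisj.mono Finset.inter_subset_right Finset.inter_subset_right)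
    have := Finset.card_union_of_disjoint hd
    rw [hsplit] at this
    omega
  -- span of union is everything
  have hspan_union : Submodule.span ℂ (f '' (J1 : Set (Fin n))) ⊔
      Submodule.span ℂ (f '' (J2 : Set (Fin n))) = ⊤ := by
    rw [← Submodule.span_union, ← Set.image_union]
    have h12 : (J1 : Set (Fin n)) ∪ (J2 : Set (Fin n)) = Set.univ := by
      rw [← Finset.coe_union, hunion, Finset.coe_univ]
    rw [h12, Set.image_univ]
    exact hrank
  -- key bound
  have key : ∀ (J : Finset (Fin n)) (m : ℕ),
      (∀ B : Finset (Fin n), B.card = k →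
        LinearIndependent ℂ (fun b : {x : Fin n // x ∈ B} => A b.1) →
        (B ∩ J).card = m) →
      finrank ℂ (Submodule.span ℂ (f '' (J : Set (Fin n)))) ≤ m := by
    intro J m hJ
    obtain ⟨s, hsJ, hsspan, hsind⟩ := exists_linearIndependent ℂ (f '' (J : Set (Fin n)))
    have hsrange : s ⊆ Set.range f :=
      hsJ.trans (Set.image_subset_range _ _)
    obtain ⟨b, hbrange, hsb, hspanb, hbind⟩ := exists_linearIndepOn_id_extension hsind hsrange
    have hbspan : Submodule.span ℂ b = ⊤ := by
      rw [eq_top_iff, ← hrank]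
      exact Submodule.span_le.mpr hspanb
    have hbfin : b.Finite := (Set.finite_range f).subset hbrange
    have hsfin : s.Finite := hbfin.subset hsb
    haveI : Fintype b := hbfin.fintype
    haveI : Fintype s := hsfin.fintype
    -- card b = k
    have hbcard : hbfin.toFinset.card = k := by
      have h1 : finrank ℂ (Submodule.span ℂ b) = b.toFinset.card :=
        finrank_span_set_eq_card hbind
    -- choice function
      rw [hbspan] at h1
      have : finrank ℂ (Fin k → ℂ) = k := Module.finrank_fin_fun ℂ
      rw [finrank_top] at h1
      rw [Set.Finite.card_toFinset]
      simp only [Set.toFinset_card] at h1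
      rw [← h1, this]
    have hchoice : ∀ v : b, ∃ i : Fin n, f i = v ∧ ((v : Fin k → ℂ) ∈ s → i ∈ J) := by
      rintro ⟨v, hv⟩
      by_cases hvs : v ∈ s
      · obtain ⟨i, hiJ, hif⟩ := hsJ hvs
        exact ⟨i, hif, fun _ => hiJ⟩
      · obtain ⟨i, hif⟩ := hbrange hv
        exact ⟨i, hif, fun h => absurd h hvs⟩
    choose g hg1 hg2 using hchoice
    set B : Finset (Fin n) := Finset.univ.image g with hBdef
    have hfg : ∀ v : b, f (g v) = (v : Fin k → ℂ) := hg1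
    have hginj : Function.Injective g := by
      intro x y hxy
      have : f (g x) = f (g y) := by rw [hxy]
      rw [hfg x, hfg y] at this
      exact Subtype.ext this
    have hBcard : B.card = k := by
      rw [hBdef, Finset.card_image_of_injective _ hginj, Finset.card_univ]
      simpa [Set.Finite.card_toFinset] using hbcard
    -- independence of rows of B
    have hfB : ∀ x : {x : Fin n // x ∈ B}, f x.1 ∈ b := by
      rintro ⟨x, hx⟩
      rw [hBdef] at hx
      obtain ⟨v, -, rfl⟩ := Finset.mem_image.mp hx
      rw [hfg v]
      exact v.2
    have hBind : LinearIndependent ℂ (fun x : {x : Fin n // x ∈ B} => A x.1) := by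
      have he : Function.Injective (fun x : {x : Fin n // x ∈ B} =>
          (⟨f x.1, hfB x⟩ : b)) := by
        rintro ⟨x, hx⟩ ⟨y, hy⟩ hxy
        simp only [Subtype.mk.injEq] at hxy
        -- f injective on B
        rw [hBdef] at hx hy
        obtain ⟨v, -, rfl⟩ := Finset.mem_image.mp hx
        obtain ⟨w, -, rfl⟩ := Finset.mem_image.mp hy
        rw [hfg v, hfg w] at hxy
        exact Subtype.ext (congrArg g (Subtype.ext hxy))
      have := hbind.comp _ he
      exact this
    have hBJ := hJ B hBcard hBind
    -- card s ≤ (B ∩ J).card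
    have hcard_le : hsfin.toFinset.card ≤ (B ∩ J).card := by
      rcases Set.eq_empty_or_nonempty s with hse | hsne
      · simp [hse]
      · haveI : Nonempty ↑b := ⟨⟨hsne.choose, hsb hsne.choose_spec⟩⟩
        apply Finset.card_le_card_of_injOn
          (fun v : Fin k → ℂ => if h : v ∈ b then g ⟨v, h⟩ else g (Classical.arbitrary b))
        · intro a ha
          rw [Finset.mem_coe, Set.Finite.mem_toFinset] at ha
          have hab : a ∈ b := hsb ha
          simp only [dif_pos hab]
          refine Finset.mem_inter.mpr ⟨?_, hg2 ⟨a, hab⟩ ha⟩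
          rw [hBdef]
          exact Finset.mem_image.mpr ⟨⟨a, hab⟩, Finset.mem_univ _, rfl⟩
        · intro a ha a' ha' haa
          rw [Finset.mem_coe, Set.Finite.mem_toFinset] at ha ha'
          have hab : a ∈ b := hsb ha
          have hab' : a' ∈ b := hsb ha'
          simp only [dif_pos hab, dif_pos hab'] at haa
          exact Subtype.ext_iff.mp (hginj haa)
    have hfr : finrank ℂ (Submodule.span ℂ (f '' (J : Set (Fin n)))) = hsfin.toFinset.card := by
      rw [← hsspan, finrank_span_set_eq_card hsind, Set.Finite.card_toFinset]
      simp [Set.toFinset_card]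
    omega
  have h1 := key J1 k1 hB
  have h2 := key J2 k2 hB2
  have hdim := Submodule.finrank_sup_add_finrank_inf_eq
    (Submodule.span ℂ (f '' (J1 : Set (Fin n)))) (Submodule.span ℂ (f '' (J2 : Set (Fin n))))
  rw [hspan_union, finrank_top, Module.finrank_fin_fun] at hdim
  have hsum_ge : finrank ℂ (Submodule.span ℂ (f '' (J1 : Set (Fin n)))) +
      finrank ℂ (Submodule.span ℂ (f '' (J2 : Set (Fin n)))) ≥ k := by omega
  have e1 : finrank ℂ (Submodule.span ℂ (f '' (J1 : Set (Fin n)))) = k1 := by omega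
  have e2 : finrank ℂ (Submodule.span ℂ (f '' (J2 : Set (Fin n)))) = k2 := by omega
  have hinf0 : finrank ℂ ↥(Submodule.span ℂ (f '' (J1 : Set (Fin n))) ⊓
      Submodule.span ℂ (f '' (J2 : Set (Fin n)))) = 0 := by omega
  refine ⟨e1, e2, ⟨?_, ?_⟩⟩
  · rw [disjoint_iff]
    exact Submodule.finrank_eq_zero.mp hinf0
  · rw [codisjoint_iff]
    exact hspan_union
end
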